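/- arXiv:1310.8623 — 3 statements merged into one kernel-verified Lean document; each statement's English description precedes it below -/
import Mathlib

section
/- Let μ_a and μ_b be Borel probability measures on [0,1] that are absolutely continuous with respect to Lebesgue measure. For each N ≥ 1 let (a_{N,n})_{n≤N} and (b_{N,n})_{n≤N} be numbers in [0,1], and assume that for every continuous function f on [0,1] one has (1/N)Σ_{n≤N} f(a_{N,n}) → ∫ f dμ_a and (1/N)Σ_{n≤N} f(b_{N,n}) → ∫ f dμ_b as N → ∞. For x ∈ [0,1] let y_l(x) be the smallest y ∈ [0,1] with μ_b([y,1]) = μ_a([0,x]) and y_u(x) the largest y ∈ [0,1] with μ_b([0,y]) = μ_a([0,x]). Then liminf_{N→∞} (1/N)Σ_{n≤N} a_{N,n} b_{N,n} ≥ ∫₀¹ x·y_l(x) dμ_a(x) and limsup_{N→∞} (1/N)Σ_{n≤N} a_{N,n} b_{N,n} ≤ ∫₀¹ x·y_u(x) dμ_a(x). -/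
open MeasureTheory Filter
open scoped ENNReal

section RearrangementAux

open Set
open scoped ENNReal

namespace RearrAux

lemma real_le_of_forall_pos_le_add {a b : ℝ} (h : ∀ ε : ℝ, 0 < ε → a ≤ b + ε) : a ≤ b := by
  by_contra hc
  push_neg at hc
  have := h ((a - b)/2) (by linarith)
  linarith

lemma noAtoms {μ : Measure ℝ} (hac : μ ≪ volume) : NullSingletonClass μ :=
  ⟨fun _ => hac Real.volume_singleton⟩

lemma meas_Icc01 {μ : Measure ℝ} [IsProbabilityMeasure μ]
    (hsupp : μ (Set.Icc (0:ℝ) 1)ᶜ = 0) : μ (Set.Icc (0:ℝ) 1) = 1 := by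
  have h := measure_add_measure_compl (μ := μ) (measurableSet_Icc (a := (0:ℝ)) (b := 1))
  simpa [hsupp] using h

lemma meas_Ici {μ : Measure ℝ} [IsProbabilityMeasure μ]
    (hsupp : μ (Set.Icc (0:ℝ) 1)ᶜ = 0) (r : ℝ) : μ (Set.Ici r) = μ (Set.Icc r 1) := by
  refine le_antisymm ?_ (measure_mono Set.Icc_subset_Ici_self)
  calc μ (Set.Ici r) ≤ μ (Set.Icc r 1 ∪ (Set.Icc (0:ℝ) 1)ᶜ) := by
        refine measure_mono fun x hx => ?_
        by_cases h1 : x ≤ 1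
        · exact Or.inl ⟨hx, h1⟩
        · exact Or.inr fun hx' => h1 hx'.2
    _ ≤ μ (Set.Icc r 1) + μ (Set.Icc (0:ℝ) 1)ᶜ := measure_union_le _ _
    _ = μ (Set.Icc r 1) := by rw [hsupp, add_zero]

lemma meas_partition {μ : Measure ℝ} [IsProbabilityMeasure μ]
    (hsupp : μ (Set.Icc (0:ℝ) 1)ᶜ = 0) {u : ℝ} (hu : u ∈ Set.Icc (0:ℝ) 1) :
    μ (Set.Ico 0 u) + μ (Set.Icc u 1) = 1 := by
  rw [← meas_Icc01 hsupp, ← measure_union _ measurableSet_Icc]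
  · congr 1
    rw [Set.Ico_union_Icc_eq_Icc hu.1 hu.2]
  · exact Set.disjoint_left.mpr fun x hx hx' => (not_le.mpr hx.2) hx'.1

lemma meas_Ico_le {μ : Measure ℝ} {c : ℝ} {β : ℝ≥0∞}
    (h : ∀ w, 0 ≤ w → w < c → μ (Set.Icc 0 w) ≤ β) : μ (Set.Ico 0 c) ≤ β := by
  rcases le_or_gt c 0 with hc | hc
  · rw [Set.Ico_eq_empty (not_lt.mpr hc)]
    simp
  · have heq : Set.Ico (0:ℝ) c = ⋃ n : ℕ, Set.Icc 0 (c - c/(n+1)) := by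
      ext x
      simp only [Set.mem_Ico, Set.mem_iUnion, Set.mem_Icc]
      constructor
      · rintro ⟨hx0, hxc⟩
        obtain ⟨n, hn⟩ := exists_nat_one_div_lt (ε := (c - x)/c) (div_pos (by linarith) hc)
        refine ⟨n, hx0, ?_⟩
        have h2 : c/(n+1) < c - x := by
          have e1 : c / ((n:ℝ)+1) = c * (1/((n:ℝ)+1)) := by ring
          have e2 : c * ((c - x)/c) = c - x := by field_simp
          rw [e1, ← e2]
          exact mul_lt_mul_of_pos_left hn hc
        linarith
      · rintro ⟨n, hx0, hxn⟩
        have : (0:ℝ) < c/(n+1) := by positivity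
        exact ⟨hx0, by linarith⟩
    rw [heq]
    have hd : Directed (· ⊆ ·) (fun n : ℕ => Set.Icc (0:ℝ) (c - c/(n+1))) := by
      refine (Monotone.directed_le ?_)
      intro n m hnm
      apply Set.Icc_subset_Icc_right
      have h1 : c/((m:ℝ)+1) ≤ c/((n:ℝ)+1) := by
        apply div_le_div_of_nonneg_left hc.le (by positivity) (by exact_mod_cast by omega)
      linarith
    rw [Directed.measure_iUnion hd]
    refine iSup_le fun n => ?_
    rcases le_or_gt 0 (c - c/(n+1)) with h0 | h0
    · refine h _ h0 ?_
      have : (0:ℝ) < c/(n+1) := by positivity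
      linarith
    · rw [Set.Icc_eq_empty (not_le.mpr h0)]
      simp

lemma lemU {μa μb : Measure ℝ} [IsProbabilityMeasure μa] [IsProbabilityMeasure μb]
    [NullSingletonClass μa] [NullSingletonClass μb]
    (hsa : μa (Set.Icc (0:ℝ) 1)ᶜ = 0) (hsb : μb (Set.Icc (0:ℝ) 1)ᶜ = 0)
    (g : ℝ → ℝ) {s t : ℝ} (hs : s ∈ Set.Icc (0:ℝ) 1) (ht : t ∈ Set.Icc (0:ℝ) 1)
    (hP : ∀ x ∈ Set.Icc (0:ℝ) 1, μb (Set.Icc 0 t) < μa (Set.Icc 0 x) → t ≤ g x) :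
    min (μa (Set.Icc s 1)) (μb (Set.Icc t 1)) ≤ μa {x ∈ Set.Icc (0:ℝ) 1 | s ≤ x ∧ t ≤ g x} := by
  by_cases hb0 : μb (Set.Icc t 1) = 0
  · calc min (μa (Set.Icc s 1)) (μb (Set.Icc t 1)) ≤ μb (Set.Icc t 1) := min_le_right _ _
      _ = 0 := hb0
      _ ≤ _ := zero_le
  have hpart_b : μb (Set.Ico 0 t) + μb (Set.Icc t 1) = 1 := meas_partition hsb ht
  have hIcoIcc_b : μb (Set.Icc 0 t) = μb (Set.Ico 0 t) :=
    (measure_congr (Ico_ae_eq_Icc (μ := μb) (a := (0:ℝ)) (b := t))).symm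
  have hβlt1 : μb (Set.Icc 0 t) < 1 := by
    rw [hIcoIcc_b]
    rcases lt_or_ge (μb (Set.Ico 0 t)) 1 with h | h
    · exact h
    · exfalso
      have h1 : μb (Set.Ico 0 t) = 1 :=
        le_antisymm (le_trans (measure_mono ((Set.Ico_subset_Icc_self).trans
          (Set.Icc_subset_Icc_right ht.2))) (le_of_eq (meas_Icc01 hsb))) h
      rw [h1] at hpart_b
      nth_rewrite 2 [(add_zero (1:ℝ≥0∞)).symm] at hpart_b
      exact hb0 ((ENNReal.add_right_inj ENNReal.one_ne_top).mp hpart_b)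
  set W : Set ℝ := {x ∈ Set.Icc (0:ℝ) 1 | μb (Set.Icc 0 t) < μa (Set.Icc 0 x)} with hW
  have h1W : (1:ℝ) ∈ W := by
    refine ⟨⟨zero_le_one, le_rfl⟩, ?_⟩
    rw [meas_Icc01 hsa]
    exact hβlt1
  have hWne : W.Nonempty := ⟨1, h1W⟩
  have hWbdd : BddBelow W := ⟨0, fun w hw => hw.1.1⟩
  set c := sInf W with hc
  have hc0 : 0 ≤ c := le_csInf hWne fun w hw => hw.1.1
  have hc1 : c ≤ 1 := csInf_le hWbdd h1W
  have hsub : Set.Ioc (max s c) 1 ⊆ {x ∈ Set.Icc (0:ℝ) 1 | s ≤ x ∧ t ≤ g x} := by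
    intro x hx
    have hxs : s < x := lt_of_le_of_lt (le_max_left _ _) hx.1
    have hxc : c < x := lt_of_le_of_lt (le_max_right _ _) hx.1
    have hx01 : x ∈ Set.Icc (0:ℝ) 1 := ⟨le_trans hs.1 hxs.le, hx.2⟩
    obtain ⟨w, hwW, hwx⟩ := exists_lt_of_csInf_lt hWne hxc
    refine ⟨hx01, hxs.le, hP x hx01 ?_⟩
    exact lt_of_lt_of_le hwW.2 (measure_mono (Set.Icc_subset_Icc_right hwx.le))
  have hIco_le : μa (Set.Ico 0 c) ≤ μb (Set.Icc 0 t) := by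
    refine meas_Ico_le fun w hw0 hwc => ?_
    by_contra hcon
    push_neg at hcon
    have hwW : w ∈ W := ⟨⟨hw0, le_trans hwc.le hc1⟩, hcon⟩
    exact absurd (csInf_le hWbdd hwW) (not_le.mpr hwc)
  have hpart_a : μa (Set.Ico 0 c) + μa (Set.Icc c 1) = 1 := meas_partition hsa ⟨hc0, hc1⟩
  have hB : μb (Set.Icc t 1) ≤ μa (Set.Icc c 1) := by
    have key : μa (Set.Ico 0 c) + μb (Set.Icc t 1) ≤ μa (Set.Ico 0 c) + μa (Set.Icc c 1) := by
      calc μa (Set.Ico 0 c) + μb (Set.Icc t 1) ≤ μb (Set.Icc 0 t) + μb (Set.Icc t 1) :=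
            add_le_add_left hIco_le _
        _ = μb (Set.Ico 0 t) + μb (Set.Icc t 1) := by rw [hIcoIcc_b]
        _ = 1 := hpart_b
        _ = μa (Set.Ico 0 c) + μa (Set.Icc c 1) := hpart_a.symm
    exact (ENNReal.add_le_add_iff_left (measure_ne_top _ _)).mp key
  calc min (μa (Set.Icc s 1)) (μb (Set.Icc t 1)) ≤ μa (Set.Icc (max s c) 1) := by
        rcases le_total s c with h | h
        · rw [max_eq_right h]
          exact le_trans (min_le_right _ _) hB
        · rw [max_eq_left h]
          exact min_le_left _ _
    _ = μa (Set.Ioc (max s c) 1) := (measure_congr (Ioc_ae_eq_Icc (μ := μa))).symm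
    _ ≤ μa {x ∈ Set.Icc (0:ℝ) 1 | s ≤ x ∧ t ≤ g x} := measure_mono hsub

lemma lemL {μa μb : Measure ℝ} [IsProbabilityMeasure μa] [IsProbabilityMeasure μb]
    [NullSingletonClass μa] [NullSingletonClass μb]
    (hsa : μa (Set.Icc (0:ℝ) 1)ᶜ = 0) (hsb : μb (Set.Icc (0:ℝ) 1)ᶜ = 0)
    (g : ℝ → ℝ) {s t : ℝ} (hs : s ∈ Set.Icc (0:ℝ) 1) (ht : t ∈ Set.Icc (0:ℝ) 1)
    (hP : ∀ x ∈ Set.Icc (0:ℝ) 1, t ≤ g x → μa (Set.Icc 0 x) ≤ μb (Set.Icc t 1)) :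
    μa {x ∈ Set.Icc (0:ℝ) 1 | s ≤ x ∧ t ≤ g x} ≤
      ENNReal.ofReal ((μa (Set.Icc s 1)).toReal + (μb (Set.Icc t 1)).toReal - 1) := by
  set V : Set ℝ := {x ∈ Set.Icc (0:ℝ) 1 | t ≤ g x} with hV
  rcases Set.eq_empty_or_nonempty V with hVe | hVne
  · have : {x ∈ Set.Icc (0:ℝ) 1 | s ≤ x ∧ t ≤ g x} = ∅ := by
      rw [Set.eq_empty_iff_forall_notMem]
      intro x hx
      have hxV : x ∈ V := ⟨hx.1, hx.2.2⟩
      rw [hVe] at hxV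
      exact hxV
    rw [this, measure_empty]
    exact zero_le
  have hVbdd : BddAbove V := ⟨1, fun v hv => hv.1.2⟩
  set d := sSup V with hd
  have hd1 : d ≤ 1 := csSup_le hVne fun v hv => hv.1.2
  have hd0 : 0 ≤ d := le_trans hVne.some_mem.1.1 (le_csSup hVbdd hVne.some_mem)
  have hEsub : {x ∈ Set.Icc (0:ℝ) 1 | s ≤ x ∧ t ≤ g x} ⊆ Set.Icc s d := by
    intro x hx
    exact ⟨hx.2.1, le_csSup hVbdd ⟨hx.1, hx.2.2⟩⟩
  rcases lt_or_ge d s with hds | hds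
  · have : μa (Set.Icc s d) = 0 := by
      rw [Set.Icc_eq_empty (not_le.mpr hds), measure_empty]
    calc μa {x ∈ Set.Icc (0:ℝ) 1 | s ≤ x ∧ t ≤ g x} ≤ μa (Set.Icc s d) := measure_mono hEsub
      _ = 0 := this
      _ ≤ _ := zero_le
  have hkey : μa (Set.Icc 0 d) ≤ μb (Set.Icc t 1) := by
    have : μa (Set.Icc 0 d) = μa (Set.Ico 0 d) :=
      (measure_congr (Ico_ae_eq_Icc (μ := μa) (a := (0:ℝ)) (b := d))).symm
    rw [this]
    refine meas_Ico_le fun w hw0 hwd => ?_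
    obtain ⟨v, hvV, hwv⟩ := exists_lt_of_lt_csSup hVne hwd
    calc μa (Set.Icc 0 w) ≤ μa (Set.Icc 0 v) := measure_mono (Set.Icc_subset_Icc_right hwv.le)
      _ ≤ μb (Set.Icc t 1) := hP v hvV.1 hvV.2
  have hpart : μa (Set.Ico 0 s) + μa (Set.Icc s 1) = 1 := meas_partition hsa hs
  have hdecomp : μa (Set.Ico 0 s) + μa (Set.Icc s d) = μa (Set.Icc 0 d) := by
    rw [← measure_union (Set.disjoint_left.mpr fun x hx hx' => (not_le.mpr hx.2) hx'.1)
      measurableSet_Icc, Set.Ico_union_Icc_eq_Icc hs.1 hds]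
  have f1 : (μa (Set.Ico 0 s)).toReal + (μa (Set.Icc s 1)).toReal = 1 := by
    have := congrArg ENNReal.toReal hpart
    rwa [ENNReal.toReal_add (measure_ne_top _ _) (measure_ne_top _ _), ENNReal.toReal_one] at this
  have f2 : (μa (Set.Ico 0 s)).toReal + (μa (Set.Icc s d)).toReal = (μa (Set.Icc 0 d)).toReal := by
    have := congrArg ENNReal.toReal hdecomp
    rwa [ENNReal.toReal_add (measure_ne_top _ _) (measure_ne_top _ _)] at this
  have f3 : (μa (Set.Icc 0 d)).toReal ≤ (μb (Set.Icc t 1)).toReal :=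
    (ENNReal.toReal_le_toReal (measure_ne_top _ _) (measure_ne_top _ _)).mpr hkey
  have hreal : (μa (Set.Icc s d)).toReal ≤
      (μa (Set.Icc s 1)).toReal + (μb (Set.Icc t 1)).toReal - 1 := by linarith
  calc μa {x ∈ Set.Icc (0:ℝ) 1 | s ≤ x ∧ t ≤ g x} ≤ μa (Set.Icc s d) := measure_mono hEsub
    _ ≤ ENNReal.ofReal ((μa (Set.Icc s 1)).toReal + (μb (Set.Icc t 1)).toReal - 1) := by
        refine (ENNReal.le_ofReal_iff_toReal_le (measure_ne_top _ _) ?_).mpr hreal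
        exact le_trans ENNReal.toReal_nonneg hreal

/-- pointwise convergence of empirical tail frequencies. -/
lemma equi_tendsto {μ : Measure ℝ} [IsProbabilityMeasure μ]
    (hsupp : μ (Set.Icc (0:ℝ) 1)ᶜ = 0) (hac : μ ≪ volume)
    (x : ℕ → ℕ → ℝ)
    (hequi : ∀ f : ℝ → ℝ, Continuous f →
      Tendsto (fun N : ℕ => (1 / (N : ℝ)) * ∑ n ∈ Finset.Icc 1 N, f (x N n))
        atTop (nhds (∫ t, f t ∂μ)))
    (s : ℝ) :
    Tendsto (fun N : ℕ => (1 / (N : ℝ)) * ∑ n ∈ Finset.Icc 1 N,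
        (if s ≤ x N n then (1:ℝ) else 0)) atTop (nhds ((μ (Set.Icc s 1)).toReal)) := by
  have : NullSingletonClass μ := noAtoms hac
  set G : ℝ := (μ (Set.Icc s 1)).toReal with hG
  have hIi : Tendsto (fun k : ℕ => (μ (Set.Icc (s - 1/(k+1)) 1)).toReal) atTop (nhds G) := by
    refine (ENNReal.tendsto_toReal (measure_ne_top μ _)).comp ?_
    have h := tendsto_measure_iInter_atTop (μ := μ)
      (s := fun k : ℕ => Set.Icc (s - 1/(k+1)) 1)
      (fun k => measurableSet_Icc.nullMeasurableSet)
      (fun k m hkm => Set.Icc_subset_Icc_left (by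
        have : (1:ℝ)/(m+1) ≤ 1/(k+1) := by
          apply one_div_le_one_div_of_le (by positivity) (by exact_mod_cast by omega)
        linarith))
      ⟨0, measure_ne_top μ _⟩
    have heq : ⋂ k : ℕ, Set.Icc (s - 1/(k+1)) 1 = Set.Icc s 1 := by
      ext t
      simp only [Set.mem_iInter, Set.mem_Icc]
      constructor
      · intro h
        refine ⟨?_, (h 0).2⟩
        by_contra hts
        push_neg at hts
        obtain ⟨k, hk⟩ := exists_nat_one_div_lt (ε := s - t) (by linarith)
        have := (h k).1
        linarith
      · intro ht k
        exact ⟨by linarith [ht.1, (by positivity : (0:ℝ) < 1/((k:ℝ)+1))], ht.2⟩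
    rwa [heq] at h
  have hIu : Tendsto (fun k : ℕ => (μ (Set.Icc (s + 1/(k+1)) 1)).toReal) atTop (nhds G) := by
    refine (ENNReal.tendsto_toReal (measure_ne_top μ _)).comp ?_
    have h := tendsto_measure_iUnion_atTop (μ := μ)
      (s := fun k : ℕ => Set.Icc (s + 1/(k+1)) 1)
      (fun k m hkm => Set.Icc_subset_Icc_left (by
        have : (1:ℝ)/(m+1) ≤ 1/(k+1) := by
          apply one_div_le_one_div_of_le (by positivity) (by exact_mod_cast by omega)
        linarith))
    have heq : ⋃ k : ℕ, Set.Icc (s + 1/(k+1)) 1 = Set.Ioc s 1 := by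
      ext t
      simp only [Set.mem_iUnion, Set.mem_Icc, Set.mem_Ioc]
      constructor
      · rintro ⟨k, hk1, hk2⟩
        exact ⟨by linarith [(by positivity : (0:ℝ) < 1/((k:ℝ)+1))], hk2⟩
      · rintro ⟨ht1, ht2⟩
        obtain ⟨k, hk⟩ := exists_nat_one_div_lt (ε := t - s) (by linarith)
        exact ⟨k, by linarith, ht2⟩
    rw [heq] at h
    rwa [measure_congr (Ioc_ae_eq_Icc (μ := μ) (a := s) (b := 1))] at h
  rw [Metric.tendsto_atTop]
  intro ε hε
  obtain ⟨K1, hK1⟩ := Metric.tendsto_atTop.mp hIi (ε/2) (by linarith)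
  obtain ⟨K2, hK2⟩ := Metric.tendsto_atTop.mp hIu (ε/2) (by linarith)
  set k := max K1 K2
  set δ : ℝ := 1/(k+1) with hδdef
  have hδ : 0 < δ := by positivity
  have hup_meas : |(μ (Set.Icc (s - δ) 1)).toReal - G| < ε/2 := by
    have := hK1 k (le_max_left _ _); rwa [Real.dist_eq] at this
  have hlo_meas : |(μ (Set.Icc (s + δ) 1)).toReal - G| < ε/2 := by
    have := hK2 k (le_max_right _ _); rwa [Real.dist_eq] at this
  set fup : ℝ → ℝ := fun t => max 0 (min 1 ((t - (s - δ))/δ)) with hfup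
  set flo : ℝ → ℝ := fun t => max 0 (min 1 ((t - s)/δ)) with hflo
  have cont_up : Continuous fup := by
    apply continuous_const.max (continuous_const.min _)
    exact (continuous_id.sub continuous_const).div_const δ
  have cont_lo : Continuous flo := by
    apply continuous_const.max (continuous_const.min _)
    exact (continuous_id.sub continuous_const).div_const δ
  have hup0 : ∀ t, 0 ≤ fup t := fun t => le_max_left _ _
  have hlo0 : ∀ t, 0 ≤ flo t := fun t => le_max_left _ _
  have hup1 : ∀ t, fup t ≤ 1 := fun t => max_le zero_le_one (min_le_left _ _)
  have hlo1 : ∀ t, flo t ≤ 1 := fun t => max_le zero_le_one (min_le_left _ _)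
  have hup_ind : ∀ t, (if s ≤ t then (1:ℝ) else 0) ≤ fup t := by
    intro t
    by_cases h : s ≤ t
    · rw [if_pos h]
      have h1 : (1:ℝ) ≤ (t - (s - δ))/δ := (le_div_iff₀ hδ).mpr (by linarith)
      calc (1:ℝ) = min 1 ((t - (s - δ))/δ) := (min_eq_left h1).symm
        _ ≤ fup t := le_max_right _ _
    · rw [if_neg h]; exact hup0 t
  have hup_le : ∀ t, fup t ≤ Set.indicator (Set.Ici (s - δ)) (fun _ => (1:ℝ)) t := by
    intro t
    by_cases h : s - δ ≤ t
    · rw [Set.indicator_of_mem (Set.mem_Ici.mpr h)]; exact hup1 t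
    · rw [Set.indicator_of_notMem (fun hc => h (Set.mem_Ici.mp hc))]
      push_neg at h
      have : (t - (s - δ))/δ ≤ 0 := div_nonpos_of_nonpos_of_nonneg (by linarith) hδ.le
      exact max_le le_rfl ((min_le_right _ _).trans this)
  have hlo_ind : ∀ t, flo t ≤ (if s ≤ t then (1:ℝ) else 0) := by
    intro t
    by_cases h : s ≤ t
    · rw [if_pos h]; exact hlo1 t
    · rw [if_neg h]
      push_neg at h
      have : (t - s)/δ ≤ 0 := div_nonpos_of_nonpos_of_nonneg (by linarith) hδ.le
      exact max_le le_rfl ((min_le_right _ _).trans this)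
  have hlo_ge : ∀ t, Set.indicator (Set.Icc (s + δ) 1) (fun _ => (1:ℝ)) t ≤ flo t := by
    intro t
    by_cases h : t ∈ Set.Icc (s + δ) 1
    · rw [Set.indicator_of_mem h]
      have h1 : (1:ℝ) ≤ (t - s)/δ := (le_div_iff₀ hδ).mpr (by linarith [h.1])
      calc (1:ℝ) = min 1 ((t - s)/δ) := (min_eq_left h1).symm
        _ ≤ flo t := le_max_right _ _
    · rw [Set.indicator_of_notMem h]; exact hlo0 t
  have hint_up : Integrable fup μ := by
    refine Integrable.mono' (integrable_const 1) cont_up.aestronglyMeasurable ?_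
    exact ae_of_all _ fun t => by rw [Real.norm_eq_abs, abs_of_nonneg (hup0 t)]; exact hup1 t
  have hint_lo : Integrable flo μ := by
    refine Integrable.mono' (integrable_const 1) cont_lo.aestronglyMeasurable ?_
    exact ae_of_all _ fun t => by rw [Real.norm_eq_abs, abs_of_nonneg (hlo0 t)]; exact hlo1 t
  have h1 : ∫ t, fup t ∂μ ≤ (μ (Set.Icc (s - δ) 1)).toReal := by
    calc ∫ t, fup t ∂μ ≤ ∫ t, Set.indicator (Set.Ici (s - δ)) (fun _ => (1:ℝ)) t ∂μ :=
          integral_mono hint_up ((integrable_const 1).indicator measurableSet_Ici) hup_le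
      _ = (μ (Set.Ici (s - δ))).toReal := integral_indicator_one measurableSet_Ici
      _ = (μ (Set.Icc (s - δ) 1)).toReal := by rw [meas_Ici hsupp]
  have h2 : (μ (Set.Icc (s + δ) 1)).toReal ≤ ∫ t, flo t ∂μ := by
    calc (μ (Set.Icc (s + δ) 1)).toReal
        = ∫ t, Set.indicator (Set.Icc (s + δ) 1) (fun _ => (1:ℝ)) t ∂μ :=
          (integral_indicator_one measurableSet_Icc).symm
      _ ≤ ∫ t, flo t ∂μ :=
          integral_mono ((integrable_const 1).indicator measurableSet_Icc) hint_lo hlo_ge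
  obtain ⟨N1, hN1⟩ := Metric.tendsto_atTop.mp (hequi fup cont_up) (ε/2) (by linarith)
  obtain ⟨N2, hN2⟩ := Metric.tendsto_atTop.mp (hequi flo cont_lo) (ε/2) (by linarith)
  refine ⟨max N1 N2, fun N hN => ?_⟩
  have hNup := hN1 N (le_trans (le_max_left _ _) hN)
  have hNlo := hN2 N (le_trans (le_max_right _ _) hN)
  rw [Real.dist_eq] at hNup hNlo ⊢
  set AN : ℝ := (1 / (N : ℝ)) * ∑ n ∈ Finset.Icc 1 N, (if s ≤ x N n then (1:ℝ) else 0) with hAN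
  have hNnn : (0:ℝ) ≤ 1 / (N:ℝ) := by positivity
  have hA_le : AN ≤ (1 / (N : ℝ)) * ∑ n ∈ Finset.Icc 1 N, fup (x N n) :=
    mul_le_mul_of_nonneg_left (Finset.sum_le_sum fun n _ => hup_ind (x N n)) hNnn
  have hA_ge : (1 / (N : ℝ)) * ∑ n ∈ Finset.Icc 1 N, flo (x N n) ≤ AN :=
    mul_le_mul_of_nonneg_left (Finset.sum_le_sum fun n _ => hlo_ind (x N n)) hNnn
  have habs1 := abs_sub_lt_iff.mp hNup
  have habs2 := abs_sub_lt_iff.mp hNlo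
  have habs3 := abs_sub_lt_iff.mp hup_meas
  have habs4 := abs_sub_lt_iff.mp hlo_meas
  rw [abs_sub_lt_iff]
  constructor
  · calc AN - G ≤ (1 / (N : ℝ)) * ∑ n ∈ Finset.Icc 1 N, fup (x N n) - G := by linarith
      _ < ε := by linarith [habs1.1, habs3.1]
  · calc G - AN ≤ G - (1 / (N : ℝ)) * ∑ n ∈ Finset.Icc 1 N, flo (x N n) := by linarith
      _ < ε := by linarith [habs2.2, habs4.2]

lemma vol_Iic_restrict {v : ℝ} (hv : v ∈ Set.Icc (0:ℝ) 1) :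
    (volume.restrict (Set.Icc (0:ℝ) 1)) (Set.Iic v) = ENNReal.ofReal v := by
  rw [Measure.restrict_apply measurableSet_Iic]
  have h : Set.Iic v ∩ Set.Icc 0 1 = Set.Icc 0 v := by
    ext x
    simp only [Set.mem_inter_iff, Set.mem_Iic, Set.mem_Icc]
    exact ⟨fun h => ⟨h.2.1, h.1⟩, fun h => ⟨h.2, h.1, le_trans h.2 hv.2⟩⟩
  rw [h, Real.volume_Icc, sub_zero]

lemma if_ofReal (P : Prop) [Decidable P] :
    ENNReal.ofReal (if P then (1:ℝ) else 0) = (if P then (1:ℝ≥0∞) else 0) := by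
  split_ifs <;> simp

lemma prod_if_eq_indicator (v w : ℝ) (p : ℝ × ℝ) :
    (if p.1 ≤ v ∧ p.2 ≤ w then (1:ℝ≥0∞) else 0)
      = Set.indicator ((Set.Iic v) ×ˢ (Set.Iic w)) 1 p := by
  by_cases h : p.1 ≤ v ∧ p.2 ≤ w
  · rw [if_pos h, Set.indicator_of_mem (show p ∈ (Set.Iic v) ×ˢ (Set.Iic w) from ⟨h.1, h.2⟩)]
    rfl
  · rw [if_neg h, Set.indicator_of_notMem
      (show p ∉ (Set.Iic v) ×ˢ (Set.Iic w) from fun hc => h ⟨hc.1, hc.2⟩)]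

lemma lint_prod_if (v w : ℝ) (hv : v ∈ Set.Icc (0:ℝ) 1) (hw : w ∈ Set.Icc (0:ℝ) 1) :
    ∫⁻ p : ℝ × ℝ, (if p.1 ≤ v ∧ p.2 ≤ w then (1:ℝ≥0∞) else 0)
        ∂((volume.restrict (Set.Icc (0:ℝ) 1)).prod (volume.restrict (Set.Icc (0:ℝ) 1)))
      = ENNReal.ofReal v * ENNReal.ofReal w := by
  have h1 : ∀ p : ℝ × ℝ, (if p.1 ≤ v ∧ p.2 ≤ w then (1:ℝ≥0∞) else 0)
      = Set.indicator ((Set.Iic v) ×ˢ (Set.Iic w)) 1 p :=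
    prod_if_eq_indicator v w
  simp only [h1]
  rw [lintegral_indicator_one (measurableSet_Iic.prod measurableSet_Iic),
    Measure.prod_prod, vol_Iic_restrict hv, vol_Iic_restrict hw]

lemma tonelli {μa : Measure ℝ} [IsProbabilityMeasure μa]
    (g : ℝ → ℝ) (hgm : Measurable g) (hg01 : ∀ x, g x ∈ Set.Icc (0:ℝ) 1) :
    ∫⁻ p : ℝ × ℝ, μa {x ∈ Set.Icc (0:ℝ) 1 | p.1 ≤ x ∧ p.2 ≤ g x}
        ∂((volume.restrict (Set.Icc (0:ℝ) 1)).prod (volume.restrict (Set.Icc (0:ℝ) 1)))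
      = ENNReal.ofReal (∫ x in Set.Icc (0:ℝ) 1, x * g x ∂μa) := by
  set π := (volume.restrict (Set.Icc (0:ℝ) 1)).prod (volume.restrict (Set.Icc (0:ℝ) 1)) with hπ
  set μ := μa.restrict (Set.Icc (0:ℝ) 1) with hμ
  have hmeas_inner : ∀ p : ℝ × ℝ, MeasurableSet {x : ℝ | p.1 ≤ x ∧ p.2 ≤ g x} := by
    intro p
    rw [Set.setOf_and]
    exact (measurableSet_le measurable_const measurable_id).inter
      (measurableSet_le measurable_const hgm)
  have hset : ∀ p : ℝ × ℝ, {x ∈ Set.Icc (0:ℝ) 1 | p.1 ≤ x ∧ p.2 ≤ g x}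
      = {x : ℝ | p.1 ≤ x ∧ p.2 ≤ g x} ∩ Set.Icc 0 1 := by
    intro p; ext x; exact ⟨fun h => ⟨h.2, h.1⟩, fun h => ⟨h.2, h.1⟩⟩
  have step1 : ∀ p : ℝ × ℝ, μa {x ∈ Set.Icc (0:ℝ) 1 | p.1 ≤ x ∧ p.2 ≤ g x}
      = ∫⁻ x : ℝ, (if p.1 ≤ x ∧ p.2 ≤ g x then (1:ℝ≥0∞) else 0) ∂μ := by
    intro p
    rw [hset p, ← Measure.restrict_apply (hmeas_inner p), ← hμ,
      ← lintegral_indicator_one (hmeas_inner p)]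
    refine lintegral_congr fun x => ?_
    rw [Set.indicator_apply]
    congr 1
  simp only [step1]
  have hswap : ∫⁻ p : ℝ × ℝ, (∫⁻ x : ℝ, (if p.1 ≤ x ∧ p.2 ≤ g x then (1:ℝ≥0∞) else 0) ∂μ) ∂π
      = ∫⁻ x : ℝ, (∫⁻ p : ℝ × ℝ, (if p.1 ≤ x ∧ p.2 ≤ g x then (1:ℝ≥0∞) else 0) ∂π) ∂μ := by
    apply lintegral_lintegral_swap
    have hms : MeasurableSet {z : (ℝ × ℝ) × ℝ | z.1.1 ≤ z.2 ∧ z.1.2 ≤ g z.2} := by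
      rw [Set.setOf_and]
      exact (measurableSet_le (measurable_fst.fst) measurable_snd).inter
        (measurableSet_le (measurable_fst.snd) (hgm.comp measurable_snd))
    have : Measurable (fun z : (ℝ × ℝ) × ℝ =>
        (if z.1.1 ≤ z.2 ∧ z.1.2 ≤ g z.2 then (1:ℝ≥0∞) else 0)) :=
      Measurable.ite hms measurable_const measurable_const
    exact this.aemeasurable
  rw [hswap]
  have step2 : ∫⁻ x : ℝ, (∫⁻ p : ℝ × ℝ, (if p.1 ≤ x ∧ p.2 ≤ g x then (1:ℝ≥0∞) else 0) ∂π) ∂μ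
      = ∫⁻ x : ℝ, ENNReal.ofReal (x * g x) ∂μ := by
    refine lintegral_congr_ae ?_
    refine ((ae_restrict_mem measurableSet_Icc).mono fun x hx => ?_)
    dsimp only
    rw [lint_prod_if x (g x) hx (hg01 x), ← ENNReal.ofReal_mul hx.1]
  rw [step2]
  rw [← ofReal_integral_eq_lintegral_ofReal]
  · refine Integrable.mono' (integrable_const 1) ?_ ?_
    · exact (measurable_id.mul hgm).aestronglyMeasurable
    · refine ((ae_restrict_mem measurableSet_Icc).mono fun x hx => ?_)
      rw [Real.norm_eq_abs, abs_mul]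
      have h1 : |x| ≤ 1 := abs_le.mpr ⟨by linarith [hx.1], hx.2⟩
      have h2 : |g x| ≤ 1 := abs_le.mpr ⟨by linarith [(hg01 x).1], (hg01 x).2⟩
      calc |x| * |g x| ≤ 1 * 1 := mul_le_mul h1 h2 (abs_nonneg _) zero_le_one
        _ = 1 := by norm_num
  · refine ((ae_restrict_mem measurableSet_Icc).mono fun x hx => ?_)
    exact mul_nonneg hx.1 (hg01 x).1

end RearrAux

end RearrangementAux

/-- Matomäki's rearrangement-type inequality for jointly averaging two
equidistributed sequences. -/
theorem rearrangement_inequality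
    (μa μb : Measure ℝ) [IsProbabilityMeasure μa] [IsProbabilityMeasure μb]
    (hμa_supp : μa (Set.Icc (0 : ℝ) 1)ᶜ = 0) (hμb_supp : μb (Set.Icc (0 : ℝ) 1)ᶜ = 0)
    (hμa_ac : μa ≪ volume) (hμb_ac : μb ≪ volume)
    (a b : ℕ → ℕ → ℝ)
    (ha_mem : ∀ N n, a N n ∈ Set.Icc (0 : ℝ) 1)
    (hb_mem : ∀ N n, b N n ∈ Set.Icc (0 : ℝ) 1)
    (ha_equi : ∀ f : ℝ → ℝ, Continuous f →
      Tendsto (fun N : ℕ => (1 / (N : ℝ)) * ∑ n ∈ Finset.Icc 1 N, f (a N n))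
        atTop (nhds (∫ x, f x ∂μa)))
    (hb_equi : ∀ f : ℝ → ℝ, Continuous f →
      Tendsto (fun N : ℕ => (1 / (N : ℝ)) * ∑ n ∈ Finset.Icc 1 N, f (b N n))
        atTop (nhds (∫ x, f x ∂μb)))
    (yl yu : ℝ → ℝ)
    (hyl : ∀ x ∈ Set.Icc (0 : ℝ) 1, yl x ∈ Set.Icc (0 : ℝ) 1 ∧
      μb (Set.Icc (yl x) 1) = μa (Set.Icc 0 x) ∧
      ∀ y ∈ Set.Icc (0 : ℝ) 1, μb (Set.Icc y 1) = μa (Set.Icc 0 x) → yl x ≤ y)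
    (hyu : ∀ x ∈ Set.Icc (0 : ℝ) 1, yu x ∈ Set.Icc (0 : ℝ) 1 ∧
      μb (Set.Icc 0 (yu x)) = μa (Set.Icc 0 x) ∧
      ∀ y ∈ Set.Icc (0 : ℝ) 1, μb (Set.Icc 0 y) = μa (Set.Icc 0 x) → y ≤ yu x) :
    (∫ x in Set.Icc (0 : ℝ) 1, x * yl x ∂μa) ≤
        liminf (fun N : ℕ => (1 / (N : ℝ)) * ∑ n ∈ Finset.Icc 1 N, a N n * b N n) atTop ∧
      limsup (fun N : ℕ => (1 / (N : ℝ)) * ∑ n ∈ Finset.Icc 1 N, a N n * b N n) atTop ≤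
        ∫ x in Set.Icc (0 : ℝ) 1, x * yu x ∂μa := by
  classical
  haveI : NullSingletonClass μa := RearrAux.noAtoms hμa_ac
  haveI : NullSingletonClass μb := RearrAux.noAtoms hμb_ac
  haveI : IsProbabilityMeasure (volume.restrict (Set.Icc (0:ℝ) 1)) := ⟨by
    rw [Measure.restrict_apply MeasurableSet.univ, Set.univ_inter, Real.volume_Icc]
    norm_num⟩
  -- monotone/antitone extensions of yu and yl
  have hyu_mono : ∀ x1 ∈ Set.Icc (0:ℝ) 1, ∀ x2 ∈ Set.Icc (0:ℝ) 1, x1 ≤ x2 → yu x1 ≤ yu x2 := by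
    intro x1 hx1 x2 hx2 h12
    by_contra hcon
    push_neg at hcon
    have hle : μa (Set.Icc 0 x1) ≤ μa (Set.Icc 0 x2) :=
      measure_mono (Set.Icc_subset_Icc_right h12)
    have h1 := (hyu x1 hx1).2.1
    have h2 := (hyu x2 hx2).2.1
    have hge : μb (Set.Icc 0 (yu x2)) ≤ μb (Set.Icc 0 (yu x1)) :=
      measure_mono (Set.Icc_subset_Icc_right hcon.le)
    have heq : μb (Set.Icc 0 (yu x1)) = μa (Set.Icc 0 x2) := by
      refine le_antisymm ?_ ?_
      · rw [h1]; exact hle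
      · rw [← h2]; exact hge
    exact absurd ((hyu x2 hx2).2.2 (yu x1) (hyu x1 hx1).1 heq) (not_le.mpr hcon)
  have hyl_anti : ∀ x1 ∈ Set.Icc (0:ℝ) 1, ∀ x2 ∈ Set.Icc (0:ℝ) 1, x1 ≤ x2 → yl x2 ≤ yl x1 := by
    intro x1 hx1 x2 hx2 h12
    by_contra hcon
    push_neg at hcon
    have hle : μa (Set.Icc 0 x1) ≤ μa (Set.Icc 0 x2) :=
      measure_mono (Set.Icc_subset_Icc_right h12)
    have h1 := (hyl x1 hx1).2.1
    have h2 := (hyl x2 hx2).2.1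
    have hge : μb (Set.Icc (yl x2) 1) ≤ μb (Set.Icc (yl x1) 1) :=
      measure_mono (Set.Icc_subset_Icc_left hcon.le)
    have heq : μb (Set.Icc (yl x1) 1) = μa (Set.Icc 0 x2) := by
      refine le_antisymm ?_ ?_
      · rw [h1]; exact hle
      · rw [← h2]; exact hge
    exact absurd ((hyl x2 hx2).2.2 (yl x1) (hyl x1 hx1).1 heq) (not_le.mpr hcon)
  set gu : ℝ → ℝ := fun x => yu ((Set.projIcc (0:ℝ) 1 zero_le_one x) : ℝ) with hgu
  set gl : ℝ → ℝ := fun x => yl ((Set.projIcc (0:ℝ) 1 zero_le_one x) : ℝ) with hgl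
  have hgu_eq : ∀ x ∈ Set.Icc (0:ℝ) 1, gu x = yu x := by
    intro x hx
    rw [hgu]
    simp only [Set.projIcc_of_mem zero_le_one hx]
  have hgl_eq : ∀ x ∈ Set.Icc (0:ℝ) 1, gl x = yl x := by
    intro x hx
    rw [hgl]
    simp only [Set.projIcc_of_mem zero_le_one hx]
  have hgu01 : ∀ x, gu x ∈ Set.Icc (0:ℝ) 1 := fun x =>
    (hyu _ (Set.projIcc (0:ℝ) 1 zero_le_one x).2).1
  have hgl01 : ∀ x, gl x ∈ Set.Icc (0:ℝ) 1 := fun x =>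
    (hyl _ (Set.projIcc (0:ℝ) 1 zero_le_one x).2).1
  have hgu_mono : Monotone gu := by
    intro x1 x2 h12
    exact hyu_mono _ (Set.projIcc (0:ℝ) 1 zero_le_one x1).2 _
      (Set.projIcc (0:ℝ) 1 zero_le_one x2).2 (Set.monotone_projIcc zero_le_one h12)
  have hgl_anti : Antitone gl := by
    intro x1 x2 h12
    exact hyl_anti _ (Set.projIcc (0:ℝ) 1 zero_le_one x1).2 _
      (Set.projIcc (0:ℝ) 1 zero_le_one x2).2 (Set.monotone_projIcc zero_le_one h12)
  have hgum : Measurable gu := hgu_mono.measurable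
  have hglm : Measurable gl := hgl_anti.measurable
  -- notation
  set π := (volume.restrict (Set.Icc (0:ℝ) 1)).prod (volume.restrict (Set.Icc (0:ℝ) 1)) with hπ
  set S : ℕ → ℝ := fun N : ℕ => (1 / (N : ℝ)) * ∑ n ∈ Finset.Icc 1 N, a N n * b N n with hS
  set A : ℕ → ℝ → ℝ := fun N s => (1 / (N : ℝ)) * ∑ n ∈ Finset.Icc 1 N,
    (if s ≤ a N n then (1:ℝ) else 0) with hA
  set B : ℕ → ℝ → ℝ := fun N t => (1 / (N : ℝ)) * ∑ n ∈ Finset.Icc 1 N,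
    (if t ≤ b N n then (1:ℝ) else 0) with hB
  set C : ℕ → ℝ → ℝ → ℝ := fun N s t => (1 / (N : ℝ)) * ∑ n ∈ Finset.Icc 1 N,
    (if s ≤ a N n ∧ t ≤ b N n then (1:ℝ) else 0) with hC
  set c : ℕ → ℝ × ℝ → ℝ≥0∞ := fun N p => ENNReal.ofReal (C N p.1 p.2) with hc
  have hAa : ∀ s : ℝ, Tendsto (fun N => A N s) atTop (nhds ((μa (Set.Icc s 1)).toReal)) :=
    fun s => RearrAux.equi_tendsto hμa_supp hμa_ac a ha_equi s
  have hBb : ∀ t : ℝ, Tendsto (fun N => B N t) atTop (nhds ((μb (Set.Icc t 1)).toReal)) :=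
    fun t => RearrAux.equi_tendsto hμb_supp hμb_ac b hb_equi t
  -- basic bounds on C
  have hC0 : ∀ N s t, 0 ≤ C N s t := by
    intro N s t
    refine mul_nonneg (by positivity) (Finset.sum_nonneg fun n _ => ?_)
    split_ifs <;> norm_num
  have hC1 : ∀ N s t, C N s t ≤ 1 := by
    intro N s t
    rcases Nat.eq_zero_or_pos N with h0 | hpos
    · subst h0
      simp [hC]
    · have hsum : ∑ n ∈ Finset.Icc 1 N, (if s ≤ a N n ∧ t ≤ b N n then (1:ℝ) else 0) ≤ N := by
        calc ∑ n ∈ Finset.Icc 1 N, (if s ≤ a N n ∧ t ≤ b N n then (1:ℝ) else 0)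
            ≤ ∑ n ∈ Finset.Icc 1 N, (1:ℝ) :=
              Finset.sum_le_sum fun n _ => by split_ifs <;> norm_num
          _ = (N : ℝ) := by
              rw [Finset.sum_const, Nat.card_Icc]
              simp
      have hN : (0:ℝ) < N := by exact_mod_cast hpos
      calc C N s t ≤ (1 / (N : ℝ)) * N := by
            exact mul_le_mul_of_nonneg_left hsum (by positivity)
        _ = 1 := by field_simp
  have hCA : ∀ N s t, C N s t ≤ A N s := by
    intro N s t
    refine mul_le_mul_of_nonneg_left (Finset.sum_le_sum fun n _ => ?_) (by positivity)
    by_cases h : s ≤ a N n ∧ t ≤ b N n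
    · rw [if_pos h, if_pos h.1]
    · rw [if_neg h]
      split_ifs <;> norm_num
  have hCB : ∀ N s t, C N s t ≤ B N t := by
    intro N s t
    refine mul_le_mul_of_nonneg_left (Finset.sum_le_sum fun n _ => ?_) (by positivity)
    by_cases h : s ≤ a N n ∧ t ≤ b N n
    · rw [if_pos h, if_pos h.2]
    · rw [if_neg h]
      split_ifs <;> norm_num
  have hCAB : ∀ N : ℕ, 1 ≤ N → ∀ s t, A N s + B N t - 1 ≤ C N s t := by
    intro N hN s t
    have hterm : ∀ n, (if s ≤ a N n then (1:ℝ) else 0) + (if t ≤ b N n then (1:ℝ) else 0) - 1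
        ≤ (if s ≤ a N n ∧ t ≤ b N n then (1:ℝ) else 0) := by
      intro n
      by_cases h1 : s ≤ a N n <;> by_cases h2 : t ≤ b N n <;>
        simp [h1, h2]
    have hNpos : (0:ℝ) < N := by exact_mod_cast hN
    have hsum : ∑ n ∈ Finset.Icc 1 N, ((if s ≤ a N n then (1:ℝ) else 0)
        + (if t ≤ b N n then (1:ℝ) else 0) - 1)
        ≤ ∑ n ∈ Finset.Icc 1 N, (if s ≤ a N n ∧ t ≤ b N n then (1:ℝ) else 0) :=
      Finset.sum_le_sum fun n _ => hterm n
    have hexp : ∑ n ∈ Finset.Icc 1 N, ((if s ≤ a N n then (1:ℝ) else 0)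
        + (if t ≤ b N n then (1:ℝ) else 0) - 1)
        = (∑ n ∈ Finset.Icc 1 N, (if s ≤ a N n then (1:ℝ) else 0))
          + (∑ n ∈ Finset.Icc 1 N, (if t ≤ b N n then (1:ℝ) else 0)) - N := by
      rw [Finset.sum_sub_distrib, Finset.sum_add_distrib, Finset.sum_const, Nat.card_Icc]
      simp
    have := mul_le_mul_of_nonneg_left (hexp ▸ hsum) (by positivity : (0:ℝ) ≤ 1 / (N:ℝ))
    calc A N s + B N t - 1
        = (1 / (N : ℝ)) * ((∑ n ∈ Finset.Icc 1 N, (if s ≤ a N n then (1:ℝ) else 0))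
          + (∑ n ∈ Finset.Icc 1 N, (if t ≤ b N n then (1:ℝ) else 0)) - N) := by
          rw [hA, hB]
          field_simp
          try ring
      _ ≤ C N s t := this
  -- measurability of c
  have hterm_meas : ∀ (v w : ℝ), Measurable (fun p : ℝ × ℝ =>
      if p.1 ≤ v ∧ p.2 ≤ w then (1:ℝ) else 0) := by
    intro v w
    refine Measurable.ite ?_ measurable_const measurable_const
    rw [Set.setOf_and]
    exact (measurableSet_le measurable_fst measurable_const).inter
      (measurableSet_le measurable_snd measurable_const)
  have hc_meas : ∀ N, Measurable (c N) := by
    intro N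
    apply ENNReal.measurable_ofReal.comp
    exact measurable_const.mul (Finset.measurable_sum _ fun n _ => hterm_meas (a N n) (b N n))
  have hterm_meas' : ∀ (v w : ℝ), Measurable (fun p : ℝ × ℝ =>
      if p.1 ≤ v ∧ p.2 ≤ w then (1:ℝ≥0∞) else 0) := by
    intro v w
    refine Measurable.ite ?_ measurable_const measurable_const
    rw [Set.setOf_and]
    exact (measurableSet_le measurable_fst measurable_const).inter
      (measurableSet_le measurable_snd measurable_const)
  -- the lintegral of c N
  have hcint : ∀ N : ℕ, ∫⁻ p, c N p ∂π = ENNReal.ofReal (S N) := by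
    intro N
    calc ∫⁻ p, c N p ∂π
        = ∫⁻ p, ENNReal.ofReal (1/(N:ℝ)) * ∑ n ∈ Finset.Icc 1 N,
            (if p.1 ≤ a N n ∧ p.2 ≤ b N n then (1:ℝ≥0∞) else 0) ∂π := by
          refine lintegral_congr fun p => ?_
          rw [hc]
          dsimp only
          rw [hC]
          dsimp only
          rw [ENNReal.ofReal_mul (by positivity), ENNReal.ofReal_sum_of_nonneg
            (fun n _ => by split_ifs <;> norm_num)]
          congr 1
          exact Finset.sum_congr rfl fun n _ => RearrAux.if_ofReal _
      _ = ENNReal.ofReal (1/(N:ℝ)) * ∑ n ∈ Finset.Icc 1 N,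
            ∫⁻ p, (if p.1 ≤ a N n ∧ p.2 ≤ b N n then (1:ℝ≥0∞) else 0) ∂π := by
          rw [lintegral_const_mul _ (Finset.measurable_sum _
            (fun n _ => hterm_meas' (a N n) (b N n))),
            lintegral_finset_sum _ (fun n _ => hterm_meas' (a N n) (b N n))]
      _ = ENNReal.ofReal (1/(N:ℝ)) * ∑ n ∈ Finset.Icc 1 N,
            ENNReal.ofReal (a N n * b N n) := by
          congr 1
          refine Finset.sum_congr rfl fun n _ => ?_
          rw [RearrAux.lint_prod_if _ _ (ha_mem N n) (hb_mem N n),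
            ← ENNReal.ofReal_mul (ha_mem N n).1]
      _ = ENNReal.ofReal (S N) := by
          rw [← ENNReal.ofReal_sum_of_nonneg
            (fun n _ => mul_nonneg (ha_mem N n).1 (hb_mem N n).1),
            ← ENNReal.ofReal_mul (by positivity)]
  -- pointwise liminf lower bound
  have hptl : ∀ p : ℝ × ℝ, ENNReal.ofReal ((μa (Set.Icc p.1 1)).toReal
      + (μb (Set.Icc p.2 1)).toReal - 1) ≤ liminf (fun N => c N p) atTop := by
    intro p
    set Ga := (μa (Set.Icc p.1 1)).toReal with hGa
    set Gb := (μb (Set.Icc p.2 1)).toReal with hGb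
    refine ENNReal.le_of_forall_pos_le_add fun ε hε hfin => ?_
    have hε' : (0:ℝ) < (ε:ℝ) := hε
    have hev1 : ∀ᶠ N in atTop, Ga - ε/2 < A N p.1 :=
      (hAa p.1).eventually (eventually_gt_nhds (by linarith))
    have hev2 : ∀ᶠ N in atTop, Gb - ε/2 < B N p.2 :=
      (hBb p.2).eventually (eventually_gt_nhds (by linarith))
    have hev : ∀ᶠ N in atTop, ENNReal.ofReal (Ga + Gb - 1 - ε) ≤ c N p := by
      filter_upwards [hev1, hev2, eventually_ge_atTop 1] with N h1 h2 hN1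
      rw [hc]
      apply ENNReal.ofReal_le_ofReal
      have h3 := hCAB N hN1 p.1 p.2
      linarith
    have h4 : ENNReal.ofReal (Ga + Gb - 1 - ε) ≤ liminf (fun N => c N p) atTop :=
      le_liminf_of_le (by isBoundedDefault) hev
    calc ENNReal.ofReal (Ga + Gb - 1)
        ≤ ENNReal.ofReal ((Ga + Gb - 1 - ε) + ε) := by
          apply ENNReal.ofReal_le_ofReal
          linarith
      _ ≤ ENNReal.ofReal (Ga + Gb - 1 - ε) + ENNReal.ofReal ε := ENNReal.ofReal_add_le
      _ ≤ liminf (fun N => c N p) atTop + ε := by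
          rw [ENNReal.ofReal_coe_nnreal]
          exact add_le_add_left h4 _
  -- pointwise limsup upper bound
  have hptu : ∀ p : ℝ × ℝ, limsup (fun N => c N p) atTop
      ≤ min (μa (Set.Icc p.1 1)) (μb (Set.Icc p.2 1)) := by
    intro p
    refine le_min ?_ ?_
    · refine ENNReal.le_of_forall_pos_le_add fun ε hε hfin => ?_
      have hε' : (0:ℝ) < (ε:ℝ) := hε
      have hev : ∀ᶠ N in atTop, c N p ≤ ENNReal.ofReal ((μa (Set.Icc p.1 1)).toReal + ε) := by
        filter_upwards [(hAa p.1).eventually (eventually_lt_nhds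
          (by linarith : (μa (Set.Icc p.1 1)).toReal < (μa (Set.Icc p.1 1)).toReal + ε))]
          with N h1
        rw [hc]
        apply ENNReal.ofReal_le_ofReal
        have := hCA N p.1 p.2
        linarith
      have h4 : limsup (fun N => c N p) atTop
          ≤ ENNReal.ofReal ((μa (Set.Icc p.1 1)).toReal + ε) :=
        limsup_le_of_le (by isBoundedDefault) hev
      calc limsup (fun N => c N p) atTop
          ≤ ENNReal.ofReal ((μa (Set.Icc p.1 1)).toReal + ε) := h4
        _ ≤ ENNReal.ofReal ((μa (Set.Icc p.1 1)).toReal) + ENNReal.ofReal ε :=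
            ENNReal.ofReal_add_le
        _ = μa (Set.Icc p.1 1) + ε := by
            rw [ENNReal.ofReal_toReal (measure_ne_top _ _), ENNReal.ofReal_coe_nnreal]
    · refine ENNReal.le_of_forall_pos_le_add fun ε hε hfin => ?_
      have hε' : (0:ℝ) < (ε:ℝ) := hε
      have hev : ∀ᶠ N in atTop, c N p ≤ ENNReal.ofReal ((μb (Set.Icc p.2 1)).toReal + ε) := by
        filter_upwards [(hBb p.2).eventually (eventually_lt_nhds
          (by linarith : (μb (Set.Icc p.2 1)).toReal < (μb (Set.Icc p.2 1)).toReal + ε))]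
          with N h1
        rw [hc]
        apply ENNReal.ofReal_le_ofReal
        have := hCB N p.1 p.2
        linarith
      have h4 : limsup (fun N => c N p) atTop
          ≤ ENNReal.ofReal ((μb (Set.Icc p.2 1)).toReal + ε) :=
        limsup_le_of_le (by isBoundedDefault) hev
      calc limsup (fun N => c N p) atTop
          ≤ ENNReal.ofReal ((μb (Set.Icc p.2 1)).toReal + ε) := h4
        _ ≤ ENNReal.ofReal ((μb (Set.Icc p.2 1)).toReal) + ENNReal.ofReal ε :=
            ENNReal.ofReal_add_le
        _ = μb (Set.Icc p.2 1) + ε := by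
            rw [ENNReal.ofReal_toReal (measure_ne_top _ _), ENNReal.ofReal_coe_nnreal]
  -- a.e. membership in the square
  have hae : ∀ᵐ p ∂π, p.1 ∈ Set.Icc (0:ℝ) 1 ∧ p.2 ∈ Set.Icc (0:ℝ) 1 := by
    rw [hπ, Measure.prod_restrict]
    filter_upwards [ae_restrict_mem (measurableSet_Icc.prod measurableSet_Icc)] with p hp
    exact ⟨hp.1, hp.2⟩
  -- the dual hypotheses for lemU / lemL
  have hguP : ∀ t : ℝ, ∀ x ∈ Set.Icc (0:ℝ) 1,
      μb (Set.Icc 0 t) < μa (Set.Icc 0 x) → t ≤ gu x := by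
    intro t x hx hlt
    rw [hgu_eq x hx]
    by_contra hcon
    push_neg at hcon
    have : μa (Set.Icc 0 x) ≤ μb (Set.Icc 0 t) := by
      rw [← (hyu x hx).2.1]
      exact measure_mono (Set.Icc_subset_Icc_right hcon.le)
    exact absurd hlt (not_lt.mpr this)
  have hglP : ∀ t : ℝ, ∀ x ∈ Set.Icc (0:ℝ) 1,
      t ≤ gl x → μa (Set.Icc 0 x) ≤ μb (Set.Icc t 1) := by
    intro t x hx htx
    rw [hgl_eq x hx] at htx
    rw [← (hyl x hx).2.1]
    exact measure_mono (Set.Icc_subset_Icc_left htx)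
  -- key ENNReal-level inequalities
  have key_l : ENNReal.ofReal (∫ x in Set.Icc (0:ℝ) 1, x * yl x ∂μa)
      ≤ liminf (fun N => ENNReal.ofReal (S N)) atTop := by
    have hi : ∫ x in Set.Icc (0:ℝ) 1, x * yl x ∂μa
        = ∫ x in Set.Icc (0:ℝ) 1, x * gl x ∂μa :=
      setIntegral_congr_fun measurableSet_Icc (fun x hx => by rw [hgl_eq x hx])
    rw [hi, ← RearrAux.tonelli gl hglm hgl01]
    calc ∫⁻ p : ℝ × ℝ, μa {x ∈ Set.Icc (0:ℝ) 1 | p.1 ≤ x ∧ p.2 ≤ gl x} ∂π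
        ≤ ∫⁻ p, liminf (fun N => c N p) atTop ∂π := by
          refine lintegral_mono_ae (hae.mono fun p hp => ?_)
          refine le_trans (RearrAux.lemL hμa_supp hμb_supp gl hp.1 hp.2 (hglP p.2)) ?_
          exact hptl p
      _ ≤ liminf (fun N => ∫⁻ p, c N p ∂π) atTop := lintegral_liminf_le hc_meas
      _ = liminf (fun N => ENNReal.ofReal (S N)) atTop := by
          congr 1
          exact funext hcint
  have key_u : limsup (fun N => ENNReal.ofReal (S N)) atTop
      ≤ ENNReal.ofReal (∫ x in Set.Icc (0:ℝ) 1, x * yu x ∂μa) := by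
    have hi : ∫ x in Set.Icc (0:ℝ) 1, x * yu x ∂μa
        = ∫ x in Set.Icc (0:ℝ) 1, x * gu x ∂μa :=
      setIntegral_congr_fun measurableSet_Icc (fun x hx => by rw [hgu_eq x hx])
    rw [hi, ← RearrAux.tonelli gu hgum hgu01]
    have hfuneq : (fun N => ENNReal.ofReal (S N)) = fun N => ∫⁻ p, c N p ∂π :=
      funext fun N => (hcint N).symm
    rw [hfuneq]
    calc limsup (fun N => ∫⁻ p, c N p ∂π) atTop
        ≤ ∫⁻ p, limsup (fun N => c N p) atTop ∂π := by
          refine limsup_lintegral_le (fun _ => (1:ℝ≥0∞)) hc_meas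
            (fun N => ae_of_all _ fun p => ?_) ?_
          · rw [hc]
            calc ENNReal.ofReal (C N p.1 p.2) ≤ ENNReal.ofReal 1 :=
                  ENNReal.ofReal_le_ofReal (hC1 N p.1 p.2)
              _ = 1 := by simp
          · rw [lintegral_one]
            exact (measure_ne_top π _)
      _ ≤ ∫⁻ p : ℝ × ℝ, μa {x ∈ Set.Icc (0:ℝ) 1 | p.1 ≤ x ∧ p.2 ≤ gu x} ∂π := by
          refine lintegral_mono_ae (hae.mono fun p hp => ?_)
          refine le_trans (hptu p) ?_
          exact RearrAux.lemU hμa_supp hμb_supp gu hp.1 hp.2 (hguP p.2)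
  -- real boundedness facts
  have hS0 : ∀ N, 0 ≤ S N := by
    intro N
    refine mul_nonneg (by positivity) (Finset.sum_nonneg fun n _ =>
      mul_nonneg (ha_mem N n).1 (hb_mem N n).1)
  have hS1 : ∀ N, S N ≤ 1 := by
    intro N
    rcases Nat.eq_zero_or_pos N with h0 | hpos
    · subst h0
      simp [hS]
    · have hsum : ∑ n ∈ Finset.Icc 1 N, a N n * b N n ≤ (N:ℝ) := by
        calc ∑ n ∈ Finset.Icc 1 N, a N n * b N n ≤ ∑ n ∈ Finset.Icc 1 N, (1:ℝ) :=
              Finset.sum_le_sum fun n _ => by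
                calc a N n * b N n ≤ 1 * 1 :=
                      mul_le_mul (ha_mem N n).2 (hb_mem N n).2 (hb_mem N n).1 zero_le_one
                  _ = 1 := by norm_num
          _ = (N:ℝ) := by
              rw [Finset.sum_const, Nat.card_Icc]
              simp
      have hN : (0:ℝ) < N := by exact_mod_cast hpos
      calc S N ≤ (1 / (N : ℝ)) * N := mul_le_mul_of_nonneg_left hsum (by positivity)
        _ = 1 := by field_simp
  have hbddU : IsBoundedUnder (· ≤ ·) atTop S := isBoundedUnder_of ⟨1, fun N => hS1 N⟩
  have hbddL : IsBoundedUnder (· ≥ ·) atTop S := isBoundedUnder_of ⟨0, fun N => hS0 N⟩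
  have hL0 : 0 ≤ liminf S atTop :=
    le_liminf_of_le hbddU.isCoboundedUnder_ge (Eventually.of_forall hS0)
  have hint_nn : 0 ≤ ∫ x in Set.Icc (0:ℝ) 1, x * yu x ∂μa :=
    setIntegral_nonneg measurableSet_Icc fun x hx => mul_nonneg hx.1 (hyu x hx).1.1
  constructor
  · -- liminf part
    refine RearrAux.real_le_of_forall_pos_le_add fun ε hε => ?_
    have hfreq : ∃ᶠ N in atTop, S N < liminf S atTop + ε :=
      frequently_lt_of_liminf_lt hbddU.isCoboundedUnder_ge (by linarith)
    have h5 : liminf (fun N => ENNReal.ofReal (S N)) atTop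
        ≤ ENNReal.ofReal (liminf S atTop + ε) :=
      liminf_le_of_frequently_le' (hfreq.mono fun N hN => ENNReal.ofReal_le_ofReal hN.le)
    have h6 := le_trans key_l h5
    exact (ENNReal.ofReal_le_ofReal_iff (by linarith)).mp h6
  · -- limsup part
    refine RearrAux.real_le_of_forall_pos_le_add fun ε hε => ?_
    have hfreq : ∃ᶠ N in atTop, limsup S atTop - ε < S N :=
      frequently_lt_of_lt_limsup hbddL.isCoboundedUnder_le (by linarith)
    have h5 : ENNReal.ofReal (limsup S atTop - ε)
        ≤ limsup (fun N => ENNReal.ofReal (S N)) atTop :=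
      le_limsup_of_frequently_le' (hfreq.mono fun N hN => ENNReal.ofReal_le_ofReal hN.le)
    have h6 := le_trans h5 key_u
    have h7 : limsup S atTop - ε ≤ ∫ x in Set.Icc (0:ℝ) 1, x * yu x ∂μa :=
      (ENNReal.ofReal_le_ofReal_iff hint_nn).mp h6
    linarith
end

section
/- Let k be a positive integer and x > 0 a real number. Then (k!/(2π)) · ∫_{−∞}^{∞} x^{1+it} / (1+it)^{k+1} dt equals 0 if 0 < x ≤ 1 and equals (log x)^k if x > 1. (This is the contour integral (k!/(2πi)) ∫_{(1)} x^s s^{−(k+1)} ds along the vertical line Re s = 1.) -/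
open MeasureTheory Set Filter Complex
open scoped Real Topology FourierTransform

-- derivative helper
lemma aux_deriv (c : ℂ) (k : ℕ) (u : ℝ) :
    HasDerivAt (fun v : ℝ ↦ (v:ℂ)^k * Complex.exp (-(c*v)))
      ((k * (u:ℂ)^(k-1)) * Complex.exp (-(c*u)) + (u:ℂ)^k * (Complex.exp (-(c*u)) * (-c))) u := by
  have h : HasDerivAt (fun z : ℂ ↦ z^k * Complex.exp (-(c*z)))
      ((k * (u:ℂ)^(k-1)) * Complex.exp (-(c*u)) + (u:ℂ)^k * (Complex.exp (-(c*u)) * (-c))) (u:ℂ) := by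
    exact (hasDerivAt_pow k _).mul (by simpa using ((hasDerivAt_id (u:ℂ)).const_mul c).neg.cexp)
  exact h.comp_ofReal

-- norm helper
lemma aux_norm (c : ℂ) (k : ℕ) (u : ℝ) :
    ‖(u:ℂ)^k * Complex.exp (-(c*u))‖ = |u|^k * Real.exp (-(c.re * u)) := by
  rw [norm_mul, norm_pow, Complex.norm_exp]
  simp

-- tendsto helper
lemma aux_tendsto (b : ℝ) (hb : 0 < b) (k : ℕ) :
    Tendsto (fun u : ℝ ↦ u^k * Real.exp (-(b * u))) atTop (𝓝 0) := by
  simpa [Real.rpow_natCast, neg_mul] using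
    tendsto_rpow_mul_exp_neg_mul_atTop_nhds_zero (k : ℝ) b hb

lemma aux_tendsto' (c : ℂ) (hc : 0 < c.re) (k : ℕ) :
    Tendsto (fun u : ℝ ↦ (u:ℂ)^k * Complex.exp (-(c*u))) atTop (𝓝 0) := by
  rw [tendsto_zero_iff_norm_tendsto_zero]
  have : (fun u : ℝ ↦ ‖(u:ℂ)^k * Complex.exp (-(c*u))‖) =ᶠ[atTop]
      fun u ↦ u^k * Real.exp (-(c.re * u)) := by
    filter_upwards [eventually_ge_atTop (0:ℝ)] with u hu
    rw [aux_norm, _root_.abs_of_nonneg hu]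
  exact (tendsto_congr' this).mpr (aux_tendsto c.re hc k)

lemma aux_integrable (c : ℂ) (hc : 0 < c.re) (k : ℕ) :
    IntegrableOn (fun u : ℝ ↦ (u:ℂ)^k * Complex.exp (-(c*u))) (Ioi 0) := by
  have hreal : IntegrableOn (fun u : ℝ ↦ u^k * Real.exp (-(c.re * u))) (Ioi 0) := by
    apply integrable_of_isBigO_exp_neg (half_pos hc)
    · exact ((continuous_pow k).mul ((continuous_const.mul continuous_id').neg.rexp)).continuousOn
    · have h1 := (aux_tendsto (c.re/2) (half_pos hc) k).isBigO_one ℝ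
      have h2 := h1.mul (Asymptotics.isBigO_refl (fun u : ℝ ↦ Real.exp (-(c.re/2) * u)) atTop)
      refine h2.congr' ?_ ?_
      · filter_upwards with u
        rw [mul_assoc, ← Real.exp_add]; ring_nf
      · filter_upwards with u using (one_mul _)
  refine Integrable.mono' hreal ?_ ?_
  · exact (Continuous.aestronglyMeasurable (by fun_prop)).restrict
  · rw [ae_restrict_iff' measurableSet_Ioi]
    filter_upwards with u hu
    rw [aux_norm, _root_.abs_of_nonneg (le_of_lt hu)]

lemma aux_integral (c : ℂ) (hc : 0 < c.re) : ∀ k : ℕ,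
    ∫ u in Ioi (0:ℝ), (u:ℂ)^k * Complex.exp (-(c*u)) = k.factorial / c^(k+1) := by
  have hc0 : c ≠ 0 := fun h ↦ by simp [h] at hc
  intro k
  induction k with
  | zero =>
    have h := integral_Ioi_of_hasDerivAt_of_tendsto'
      (f := fun u : ℝ ↦ (-c⁻¹) * Complex.exp (-(c*u)))
      (f' := fun u : ℝ ↦ Complex.exp (-(c*u))) (a := 0)
      (fun u _ ↦ by
        have := ((((hasDerivAt_id (u:ℂ)).const_mul c).neg.cexp).const_mul (-c⁻¹)).comp_ofReal
        refine this.congr_deriv ?_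
        simp only [Pi.neg_apply, id, mul_one]
        field_simp)
      (by simpa using aux_integrable c hc 0)
      (by simpa using (aux_tendsto' c hc 0).const_mul (-c⁻¹))
    simp only [Complex.ofReal_zero, mul_zero, neg_zero, Complex.exp_zero, mul_one, zero_sub,
      neg_neg] at h
    simpa [pow_one] using h
  | succ n ih =>
    have hG : ∀ u ∈ Ici (0:ℝ), HasDerivAt (fun v : ℝ ↦ (v:ℂ)^(n+1) * Complex.exp (-(c*v)))
        (((n+1 : ℕ) * (u:ℂ)^n) * Complex.exp (-(c*u)) + (u:ℂ)^(n+1) * (Complex.exp (-(c*u)) * (-c))) u :=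
      fun u _ ↦ by simpa using aux_deriv c (n+1) u
    have hint : IntegrableOn (fun u : ℝ ↦
        (((n+1 : ℕ) * (u:ℂ)^n) * Complex.exp (-(c*u)) + (u:ℂ)^(n+1) * (Complex.exp (-(c*u)) * (-c))))
        (Ioi 0) := by
      apply Integrable.add
      · exact IntegrableOn.congr_fun ((aux_integrable c hc n).const_mul _)
          (fun u _ ↦ by ring) measurableSet_Ioi
      · exact IntegrableOn.congr_fun ((aux_integrable c hc (n+1)).mul_const (-c))
          (fun u _ ↦ by ring) measurableSet_Ioi
    have h := integral_Ioi_of_hasDerivAt_of_tendsto' hG hint (aux_tendsto' c hc (n+1))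
    simp only [Complex.ofReal_zero, zero_pow (Nat.succ_ne_zero n), zero_mul, mul_zero, sub_zero] at h
    rw [integral_add
        (IntegrableOn.congr_fun ((aux_integrable c hc n).const_mul _)
          (fun u _ ↦ by ring) measurableSet_Ioi)
        (IntegrableOn.congr_fun ((aux_integrable c hc (n+1)).mul_const (-c))
          (fun u _ ↦ by ring) measurableSet_Ioi)] at h
    have e1 : ∫ u in Ioi (0:ℝ), ((n+1 : ℕ) * (u:ℂ)^n) * Complex.exp (-(c*u))
        = (n+1 : ℕ) * (n.factorial / c^(n+1)) := by
      rw [← ih, ← integral_const_mul]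
      exact setIntegral_congr_fun measurableSet_Ioi (fun u _ ↦ by ring)
    have e2 : ∫ u in Ioi (0:ℝ), (u:ℂ)^(n+1) * (Complex.exp (-(c*u)) * (-c))
        = (-c) * ∫ u in Ioi (0:ℝ), (u:ℂ)^(n+1) * Complex.exp (-(c*u)) := by
      rw [← integral_const_mul]
      exact setIntegral_congr_fun measurableSet_Ioi (fun u _ ↦ by ring)
    rw [e1, e2] at h
    set I := ∫ u in Ioi (0:ℝ), (u:ℂ)^(n+1) * Complex.exp (-(c*u)) with hI
    have hA : (((n:ℂ)+1) * (n.factorial:ℂ)) / c^(n+1) = c * I := by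
      push_cast at h ⊢
      linear_combination h
    calc I = (c * I) / c := (mul_div_cancel_left₀ I hc0).symm
      _ = (((n:ℂ)+1) * (n.factorial:ℂ)) / c^(n+1) / c := by rw [hA]
      _ = ((n+1).factorial : ℂ) / c^(n+1+1) := by
          rw [div_div, ← pow_succ, Nat.factorial_succ]
          push_cast
          ring_nf

noncomputable def auxf (k : ℕ) : ℝ → ℂ := fun u ↦ (↑(max u 0) : ℂ)^k * Complex.exp (-(u:ℂ))

lemma auxf_cont (k : ℕ) : Continuous (auxf k) := by
  unfold auxf; fun_prop

lemma auxf_eq_indicator (k : ℕ) (hk : 1 ≤ k) :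
    auxf k = Set.indicator (Ioi 0) (fun u : ℝ ↦ (u:ℂ)^k * Complex.exp (-((1:ℂ)*u))) := by
  funext u
  rcases lt_or_ge 0 u with hu | hu
  · rw [Set.indicator_of_mem (Set.mem_Ioi.mpr hu)]
    simp [auxf, max_eq_left hu.le, one_mul]
  · rw [Set.indicator_of_notMem (by simpa using hu)]
    simp [auxf, max_eq_right hu, zero_pow (by omega : k ≠ 0)]

lemma auxf_integrable (k : ℕ) (hk : 1 ≤ k) : Integrable (auxf k) := by
  rw [auxf_eq_indicator k hk, integrable_indicator_iff measurableSet_Ioi]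
  exact aux_integrable 1 (by simp) k

lemma auxf_fourier (k : ℕ) (hk : 1 ≤ k) (w : ℝ) :
    𝓕 (auxf k) w = (k.factorial : ℂ) / ((1:ℂ) + (2*π*w : ℝ) * Complex.I)^(k+1) := by
  set c : ℂ := (1:ℂ) + (2*π*w : ℝ) * Complex.I with hc
  have hcre : 0 < c.re := by simp [hc]
  rw [Real.fourier_real_eq_integral_exp_smul]
  have heq : (fun v : ℝ ↦ Complex.exp (↑(-2 * π * v * w) * Complex.I) • auxf k v)
      = Set.indicator (Ioi 0) (fun v : ℝ ↦ (v:ℂ)^k * Complex.exp (-(c*v))) := by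
    funext v
    rcases lt_or_ge 0 v with hv | hv
    · rw [Set.indicator_of_mem (Set.mem_Ioi.mpr hv)]
      simp only [auxf, max_eq_left hv.le, smul_eq_mul]
      rw [mul_comm, mul_assoc, ← Complex.exp_add]
      congr 2
      push_cast [hc]
      ring
    · rw [Set.indicator_of_notMem (by simpa using hv)]
      simp [auxf, max_eq_right hv, zero_pow (by omega : k ≠ 0)]
  rw [heq, integral_indicator measurableSet_Ioi, aux_integral c hcre k]

lemma auxf_fourier_integrable (k : ℕ) (hk : 1 ≤ k) : Integrable (𝓕 (auxf k)) := by
  have hF : 𝓕 (auxf k) = fun w ↦ (k.factorial : ℂ) / ((1:ℂ) + (2*π*w : ℝ) * Complex.I)^(k+1) :=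
    funext (auxf_fourier k hk)
  rw [hF]
  have hg : Integrable (fun w : ℝ ↦ (k.factorial : ℝ) * (1 + (2*π*w)^2)⁻¹) := by
    have := integrable_inv_one_add_sq.comp_mul_left' (R := 2*π)
      (by positivity : (2*π : ℝ) ≠ 0)
    exact this.const_mul _
  refine hg.mono' ?_ ?_
  · apply Continuous.aestronglyMeasurable
    apply continuous_const.div (by fun_prop)
    intro w
    apply pow_ne_zero
    intro h
    have : ((1:ℂ) + (2*π*w : ℝ) * Complex.I).re = 0 := by rw [h]; simp
    simp at this
  · filter_upwards with w
    set z : ℂ := (1:ℂ) + (2*π*w : ℝ) * Complex.I with hz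
    have hz2 : ‖z‖^2 = 1 + (2*π*w)^2 := by
      rw [← Complex.normSq_eq_norm_sq]
      simp [hz, Complex.normSq_apply]; ring
    have h1 : 1 ≤ ‖z‖ := by nlinarith [norm_nonneg z, sq_nonneg (2*π*w)]
    rw [norm_div, norm_pow]
    have hle : ‖z‖^2 ≤ ‖z‖^(k+1) := pow_le_pow_right₀ h1 (by omega)
    rw [Complex.norm_natCast]
    rw [div_le_iff₀ (by positivity), mul_assoc]
    calc (k.factorial : ℝ) = k.factorial * 1 := (mul_one _).symm
      _ ≤ k.factorial * ((1 + (2*π*w)^2)⁻¹ * ‖z‖^(k+1)) := by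
          apply mul_le_mul_of_nonneg_left ?_ (by positivity)
          rw [← hz2, inv_mul_eq_div, le_div_iff₀ (by positivity), one_mul]
          exact hle








/-- Mellin inversion: `(k!/(2πi)) ∫_{(1)} x^s s^{−(k+1)} ds` equals `0` for
`0 < x ≤ 1` and `(log x)^k` for `x > 1`; the line integral is parametrized as
`s = 1 + it`, giving `(k!/(2π)) ∫_ℝ x^{1+it}/(1+it)^{k+1} dt`. -/
theorem mellin_inversion_line_integral (k : ℕ) (hk : 1 ≤ k) (x : ℝ) (hx : 0 < x) :
    ((k.factorial : ℂ) / (2 * Real.pi)) *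
        ∫ t : ℝ, (x : ℂ) ^ ((1 : ℂ) + t * Complex.I) /
          ((1 : ℂ) + t * Complex.I) ^ (k + 1) =
      if 1 < x then ((Real.log x : ℂ)) ^ k else 0 := by
  set L := Real.log x with hL
  have hπ : (0:ℝ) < π := Real.pi_pos
  have hkne : (k.factorial : ℂ) ≠ 0 := Nat.cast_ne_zero.mpr k.factorial_ne_zero
  have hfin : 𝓕⁻ (𝓕 (auxf k)) L = auxf k L :=
    (auxf_integrable k hk).fourierInv_fourier_eq (auxf_fourier_integrable k hk)
      ((auxf_cont k).continuousAt)
  rw [Real.fourierInv_eq_fourier_neg,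
    Real.fourier_real_eq_integral_exp_smul] at hfin
  set h : ℝ → ℂ := fun t ↦
    Complex.exp (↑(t*L) * Complex.I) * ((k.factorial:ℂ)/((1:ℂ)+(t:ℝ)*Complex.I)^(k+1)) with hh
  have hcomp : ∀ v : ℝ, Complex.exp (↑(-2*π*v*(-L)) * Complex.I) • 𝓕 (auxf k) v
      = h (2*π*v) := by
    intro v
    rw [auxf_fourier k hk v, smul_eq_mul, hh]
    push_cast
    ring_nf
  have hint : ∫ v : ℝ, h (2*π*v) = auxf k L := by
    rw [← hfin]
    exact integral_congr_ae (Filter.Eventually.of_forall fun v ↦ (hcomp v).symm)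
  have hscale : ∫ t : ℝ, h t = (2*π : ℝ) • ∫ v : ℝ, h (2*π*v) := by
    rw [MeasureTheory.Measure.integral_comp_mul_left h (2*π), abs_of_pos (by positivity :
      (0:ℝ) < (2*π)⁻¹), smul_smul, mul_inv_cancel₀ (by positivity), one_smul]
  have hxne : (x:ℂ) ≠ 0 := ofReal_ne_zero.mpr hx.ne'
  have hint2 : ∀ t : ℝ, (x:ℂ)^((1:ℂ)+t*Complex.I)/((1:ℂ)+t*Complex.I)^(k+1)
      = ((x:ℂ)/(k.factorial:ℂ)) * h t := by
    intro t
    rw [hh]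
    rw [Complex.cpow_def_of_ne_zero hxne, ← Complex.ofReal_log hx.le]
    have he : ((L:ℂ) * ((1:ℂ) + t*Complex.I)) = ↑L + ↑(t*L)*Complex.I := by push_cast; ring
    rw [he, Complex.exp_add, ← Complex.ofReal_exp, Real.exp_log hx]
    have hD : ((1:ℂ) + t*Complex.I) ≠ 0 := fun H ↦ by simpa using congrArg Complex.re H
    field_simp [hkne, pow_ne_zero (k+1) hD]
  have hmain : ((k.factorial : ℂ) / (2 * Real.pi)) *
        ∫ t : ℝ, (x : ℂ) ^ ((1 : ℂ) + t * Complex.I) /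
          ((1 : ℂ) + t * Complex.I) ^ (k + 1) = (x:ℂ) * auxf k L := by
    rw [integral_congr_ae (Filter.Eventually.of_forall hint2), integral_const_mul, hscale, hint]
    rw [real_smul]
    push_cast
    field_simp [hkne, Complex.ofReal_ne_zero.mpr hπ.ne']
  rw [hmain]
  rcases lt_or_ge 1 x with hx1 | hx1
  · rw [if_pos hx1]
    have hL0 : 0 < L := Real.log_pos hx1
    have hexp : Complex.exp (-(L:ℂ)) = ((x⁻¹ : ℝ) : ℂ) := by
      rw [← Complex.ofReal_neg, ← Complex.ofReal_exp, Real.exp_neg, Real.exp_log hx]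
    simp only [auxf, max_eq_left hL0.le, hexp]
    rw [mul_comm ((L:ℂ)^k) _, ← mul_assoc, ← Complex.ofReal_mul,
      mul_inv_cancel₀ hx.ne', Complex.ofReal_one, one_mul]
  · rw [if_neg (not_lt.mpr hx1)]
    have hL0 : L ≤ 0 := Real.log_nonpos hx.le hx1
    simp [auxf, max_eq_right hL0, zero_pow (by omega : k ≠ 0)]
end

section
/- Let x ≥ 1 be a real number, let k and l be nonnegative integers, and let ε > 0. Then the iterated contour integral (1/(2πi))² ∮_{|s₂|=2ε} ∮_{|s₁|=ε} x^{s₁+s₂} / ((s₁+s₂)^l · (s₁ s₂)^{k+1}) ds₁ ds₂, taken over the positively oriented circles of radii ε and 2ε centered at the origin, equals binom(2k, k) · (log x)^{2k+l} / (2k+l)!. -/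
open MeasureTheory Metric Complex Finset
open scoped Nat

private noncomputable def aa (L : ℂ) (l : ℕ) (m : ℕ) : ℂ := L ^ (m + l) / ((m + l)! : ℂ)

private noncomputable def HH (L : ℂ) (l : ℕ) (z : ℂ) : ℂ := ∑' m, aa L l m * z ^ m

private noncomputable def QQ (L : ℂ) (l : ℕ) (j : ℕ) (s : ℂ) : ℂ :=
  ∑ n ∈ Finset.range l,
    L ^ n / (n ! : ℂ) * (((∏ i ∈ Finset.range j, ((n : ℤ) - l - i)) : ℤ) : ℂ)
      * s ^ ((n : ℤ) - l - j)

private lemma itd_itd {f : ℂ → ℂ} (m n : ℕ) :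
    iteratedDeriv m (iteratedDeriv n f) = iteratedDeriv (m + n) f := by
  rw [iteratedDeriv_eq_iterate, iteratedDeriv_eq_iterate, iteratedDeriv_eq_iterate,
    Function.iterate_add_apply]

private lemma cauchy_coeff {f : ℂ → ℂ} {r : ℝ} (hr : 0 < r)
    (hd : DifferentiableOn ℂ f (Metric.closedBall 0 r)) (n : ℕ) :
    (∮ z in C(0, r), f z / z ^ (n + 1)) =
      2 * Real.pi * Complex.I * iteratedDeriv n f 0 / (n ! : ℂ) := by
  lift r to NNReal using hr.le with R hR
  have hR0 : 0 < R := by exact_mod_cast hr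
  have hp : HasFPowerSeriesOnBall f (cauchyPowerSeries f 0 R) 0 R :=
    hd.hasFPowerSeriesOnBall hR0
  have h1 := hp.factorial_smul (1 : ℂ) n
  rw [cauchyPowerSeries_apply] at h1
  have h2 : (fun z : ℂ => ((1:ℂ) / (z - 0)) ^ n • (z - 0)⁻¹ • f z)
      = fun z => f z / z ^ (n + 1) := by
    funext z
    simp only [sub_zero, smul_eq_mul, one_div, inv_pow, pow_succ, div_eq_mul_inv, mul_inv]
    ring
  rw [h2] at h1
  rw [← iteratedDeriv_eq_iteratedFDeriv] at h1
  rw [nsmul_eq_mul, smul_eq_mul] at h1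
  have hπ : (2 * (Real.pi:ℂ) * Complex.I) ≠ 0 := by
    simp [Real.pi_ne_zero, Complex.I_ne_zero]
  have hfac : ((n ! : ℕ) : ℂ) ≠ 0 := Nat.cast_ne_zero.mpr n.factorial_ne_zero
  field_simp at h1 ⊢
  linear_combination h1

private lemma summable_aa (L : ℂ) (l : ℕ) (z : ℂ) :
    Summable fun m => ‖aa L l m * z ^ m‖ := by
  have h := (Real.summable_pow_div_factorial (‖L‖ * ‖z‖)).mul_left (‖L‖ ^ l)
  apply Summable.of_nonneg_of_le (fun m => norm_nonneg _) _ h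
  intro m
  have h1 : ‖aa L l m * z ^ m‖ = ‖L‖ ^ (m + l) / ((m + l)! : ℝ) * ‖z‖ ^ m := by
    simp [aa, norm_div, norm_pow, Nat.abs_cast]
  rw [h1]
  have hle : ((m ! : ℕ) : ℝ) ≤ (((m + l)! : ℕ) : ℝ) := by
    exact_mod_cast Nat.factorial_le (Nat.le_add_right m l)
  calc ‖L‖ ^ (m + l) / ((m + l)! : ℝ) * ‖z‖ ^ m
      ≤ ‖L‖ ^ (m + l) / ((m ! : ℕ) : ℝ) * ‖z‖ ^ m := by gcongr
    _ = ‖L‖ ^ l * ((‖L‖ * ‖z‖) ^ m / (m ! : ℝ)) := by rw [pow_add, mul_pow]; ring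

private lemma norm_aa_mul (L : ℂ) (l : ℕ) (r : NNReal) (m : ℕ) :
    ‖aa L l m * (((r:ℝ)) : ℂ) ^ m‖ = ‖aa L l m‖ * (r : ℝ) ^ m := by
  rw [norm_mul, norm_pow, Complex.norm_real, Real.norm_eq_abs, NNReal.abs_eq]

private lemma hasSeries_HH (L : ℂ) (l : ℕ) :
    HasFPowerSeriesOnBall (HH L l) (FormalMultilinearSeries.ofScalars ℂ (aa L l)) 0 ⊤ := by
  constructor
  · rw [top_le_iff]
    apply FormalMultilinearSeries.radius_eq_top_of_summable_norm
    intro r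
    simp_rw [FormalMultilinearSeries.ofScalars_norm]
    exact (summable_aa L l (((r:ℝ)) : ℂ)).congr (fun m => norm_aa_mul L l r m)
  · exact ENNReal.zero_lt_top
  · intro y _
    rw [zero_add]
    have hs : HasSum (fun m => aa L l m * y ^ m) (HH L l y) :=
      ((summable_aa L l y).of_norm).hasSum
    have hfn : (fun n => FormalMultilinearSeries.ofScalars ℂ (aa L l) n fun _ => y)
        = fun m => aa L l m * y ^ m := by
      funext n
      rw [FormalMultilinearSeries.ofScalars_apply_eq, smul_eq_mul]
    rw [hfn]
    exact hs

private lemma HH_diff (L : ℂ) (l : ℕ) : Differentiable ℂ (HH L l) := by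
  have := (hasSeries_HH L l).differentiableOn
  rw [Metric.emetric_ball_top] at this
  exact (differentiableOn_univ).mp this

private lemma HH_iter_diff (L : ℂ) (l : ℕ) (j : ℕ) :
    Differentiable ℂ (iteratedDeriv j (HH L l)) := by
  rw [iteratedDeriv_eq_iterate]
  exact (((HH_diff L l).contDiff).iterate_deriv j).differentiable (by simp)

private lemma HH_itd_zero (L : ℂ) (l : ℕ) (n : ℕ) :
    iteratedDeriv n (HH L l) 0 = (n ! : ℂ) * aa L l n := by
  rw [iteratedDeriv_eq_iteratedFDeriv, ← (hasSeries_HH L l).factorial_smul (1 : ℂ) n,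
    FormalMultilinearSeries.ofScalars_apply_eq]
  simp [nsmul_eq_mul]

private lemma QQ_step (L : ℂ) (l : ℕ) (j : ℕ) {s : ℂ} (hs : s ≠ 0) :
    HasDerivAt (QQ L l j) (QQ L l (j + 1) s) s := by
  unfold QQ
  apply HasDerivAt.fun_sum
  intro n _
  have h := (hasDerivAt_zpow ((n : ℤ) - l - j) s (Or.inl hs)).const_mul
    (L ^ n / (n ! : ℂ) * (((∏ i ∈ Finset.range j, ((n : ℤ) - l - i)) : ℤ) : ℂ))
  have he : ((n : ℤ) - l - (j + 1 : ℕ)) = ((n : ℤ) - l - j) - 1 := by push_cast; ring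
  rw [Finset.prod_range_succ, he]
  convert h using 1
  · rfl
  push_cast
  ring

private lemma F_split_base (L : ℂ) (l : ℕ) {s : ℂ} (hs : s ≠ 0) :
    Complex.exp (L * s) / s ^ l = QQ L l 0 s + HH L l s := by
  have hsumm : Summable fun n => (L * s) ^ n / (n ! : ℂ) := by
    apply Summable.of_norm
    have := Real.summable_pow_div_factorial ‖L * s‖
    apply this.congr
    intro n
    simp [norm_div, norm_pow]
  have hexp : Complex.exp (L * s) = ∑' n, (L * s) ^ n / (n ! : ℂ) := by
    rw [Complex.exp_eq_exp_ℂ, NormedSpace.exp_eq_tsum_div]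
  have hsplit := Summable.sum_add_tsum_nat_add l hsumm
  have htail : (∑' (i : ℕ), (L * s) ^ (i + l) / (((i + l)! : ℕ) : ℂ)) = s ^ l * HH L l s := by
    rw [HH, ← tsum_mul_left]
    congr 1
    funext i
    rw [aa, mul_pow, pow_add]
    ring
  have hsl : (s : ℂ) ^ l ≠ 0 := pow_ne_zero l hs
  rw [hexp, ← hsplit, htail, add_div, mul_div_cancel_left₀ _ hsl]
  congr 1
  rw [Finset.sum_div, QQ]
  apply Finset.sum_congr rfl
  intro n _
  have hz : s ^ ((n : ℤ) - l - (0 : ℕ)) = s ^ n / s ^ l := by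
    push_cast
    rw [sub_zero, zpow_sub₀ hs, zpow_natCast, zpow_natCast]
  rw [hz, Finset.range_zero, Finset.prod_empty, mul_pow]
  push_cast
  ring

private lemma F_split (L : ℂ) (l : ℕ) (j : ℕ) :
    ∀ s : ℂ, s ≠ 0 → iteratedDeriv j (fun s => Complex.exp (L * s) / s ^ l) s
      = QQ L l j s + iteratedDeriv j (HH L l) s := by
  induction j with
  | zero =>
    intro s hs
    simpa using F_split_base L l hs
  | succ j IH =>
    intro s hs
    rw [iteratedDeriv_succ]
    have hev : iteratedDeriv j (fun s => Complex.exp (L * s) / s ^ l)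
        =ᶠ[nhds s] fun t => QQ L l j t + iteratedDeriv j (HH L l) t := by
      filter_upwards [IsOpen.mem_nhds isOpen_compl_singleton hs] with t ht
      exact IH t ht
    rw [hev.deriv_eq]
    have h1 : HasDerivAt (QQ L l j) (QQ L l (j + 1) s) s := QQ_step L l j hs
    have h2 : HasDerivAt (iteratedDeriv j (HH L l)) (iteratedDeriv (j + 1) (HH L l) s) s := by
      rw [iteratedDeriv_succ]
      exact ((HH_iter_diff L l j) s).hasDerivAt |>.deriv ▸ ((HH_iter_diff L l j) s).hasDerivAt
    exact (h1.add h2).deriv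

private lemma QQ_zero_integral (L : ℂ) (l k : ℕ) {R : ℝ} (hR : 0 < R) :
    (∮ z in C(0, R), QQ L l k z / z ^ (k + 1)) = 0 := by
  set V : ℂ → ℂ := fun z => ∑ n ∈ Finset.range l,
    (L ^ n / (n ! : ℂ) * (((∏ i ∈ Finset.range k, ((n : ℤ) - l - i)) : ℤ) : ℂ)
      / ((((n : ℤ) - l - 2 * k) : ℤ) : ℂ)) * z ^ ((n : ℤ) - l - 2 * k) with hV
  apply circleIntegral.integral_eq_zero_of_hasDerivWithinAt (f := V) hR.le
  intro z hz
  have hz0 : z ≠ 0 := by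
    intro h
    rw [h, mem_sphere_zero_iff_norm, norm_zero] at hz
    exact hR.ne hz
  have hval : QQ L l k z / z ^ (k + 1) = ∑ n ∈ Finset.range l,
      (L ^ n / (n ! : ℂ) * (((∏ i ∈ Finset.range k, ((n : ℤ) - l - i)) : ℤ) : ℂ))
        * z ^ ((n : ℤ) - l - 2 * k - 1) := by
    rw [QQ, Finset.sum_div]
    apply Finset.sum_congr rfl
    intro n _
    have hzz : z ^ ((n : ℤ) - l - k) / z ^ (k + 1) = z ^ ((n : ℤ) - l - 2 * k - 1) := by
      rw [← zpow_natCast z (k + 1), ← zpow_sub₀ hz0]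
      congr 1
      push_cast
      ring
    rw [mul_div_assoc, hzz]
  rw [hval]
  apply HasDerivAt.hasDerivWithinAt
  apply HasDerivAt.fun_sum
  intro n hn
  have hn' : n < l := Finset.mem_range.mp hn
  have hne : ((((n : ℤ) - l - 2 * k) : ℤ) : ℂ) ≠ 0 := by
    rw [Int.cast_ne_zero]
    omega
  have h := (hasDerivAt_zpow ((n : ℤ) - l - 2 * k) z (Or.inl hz0)).const_mul
    (L ^ n / (n ! : ℂ) * (((∏ i ∈ Finset.range k, ((n : ℤ) - l - i)) : ℤ) : ℂ)
      / ((((n : ℤ) - l - 2 * k) : ℤ) : ℂ))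
  convert h using 1
  · rfl
  rw [show ((n : ℤ) - l - 2 * k - 1) = ((n : ℤ) - l - 2 * k) - 1 by ring]
  have hfac : ((n ! : ℕ) : ℂ) ≠ 0 := Nat.cast_ne_zero.mpr n.factorial_ne_zero
  have hne' : ((n : ℂ) - l - 2 * k) ≠ 0 := by
    intro hxx
    apply hne
    push_cast
    exact hxx
  push_cast
  field_simp

/-- Residue computation (after Motohashi): the iterated contour integral
`(1/(2πi))² ∮_{|s₂|=2ε} ∮_{|s₁|=ε} x^{s₁+s₂}/((s₁+s₂)^l (s₁s₂)^{k+1}) ds₁ ds₂`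
equals `binom(2k,k)(log x)^{2k+l}/(2k+l)!`. -/
theorem double_residue_integral (x : ℝ) (hx : 1 ≤ x) (k l : ℕ) (ε : ℝ)
    (hε : 0 < ε) :
    (1 / (2 * Real.pi * Complex.I)) ^ 2 *
        (∮ s₂ in C(0, 2 * ε), ∮ s₁ in C(0, ε),
          (x : ℂ) ^ (s₁ + s₂) / ((s₁ + s₂) ^ l * (s₁ * s₂) ^ (k + 1))) =
      (Nat.choose (2 * k) k : ℂ) * (Real.log x : ℂ) ^ (2 * k + l) /
        (Nat.factorial (2 * k + l) : ℂ) := by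
  have hx0 : (0:ℝ) < x := by linarith
  have hxc : (x : ℂ) ≠ 0 := by
    simpa using hx0.ne'
  set L : ℂ := (Real.log x : ℂ) with hL
  have hcpow : ∀ s : ℂ, (x : ℂ) ^ s = Complex.exp (L * s) := by
    intro s
    rw [Complex.cpow_def_of_ne_zero hxc, ← Complex.ofReal_log hx0.le]
  set F : ℂ → ℂ := fun s => Complex.exp (L * s) / s ^ l with hF
  have hπ : (2 * (Real.pi:ℂ) * Complex.I) ≠ 0 := by
    simp [Real.pi_ne_zero, Complex.I_ne_zero]
  have hkfac : ((k ! : ℕ) : ℂ) ≠ 0 := Nat.cast_ne_zero.mpr k.factorial_ne_zero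
  -- inner integral
  have hinner : ∀ s₂ ∈ sphere (0:ℂ) (2 * ε),
      (∮ s₁ in C(0, ε), (x : ℂ) ^ (s₁ + s₂) / ((s₁ + s₂) ^ l * (s₁ * s₂) ^ (k + 1)))
        = (2 * Real.pi * Complex.I * ((k ! : ℕ) : ℂ)⁻¹) *
            (QQ L l k s₂ / s₂ ^ (k + 1) + iteratedDeriv k (HH L l) s₂ / s₂ ^ (k + 1)) := by
    intro s₂ hs₂
    have hns₂ : ‖s₂‖ = 2 * ε := mem_sphere_zero_iff_norm.mp hs₂
    have hs₂0 : s₂ ≠ 0 := by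
      intro h
      rw [h, norm_zero] at hns₂
      linarith
    have hadd : ∀ s₁ ∈ Metric.closedBall (0:ℂ) ε, s₁ + s₂ ≠ 0 := by
      intro s₁ h1 h2
      rw [Metric.mem_closedBall, dist_zero_right] at h1
      have : s₁ = -s₂ := by linear_combination h2
      rw [this, norm_neg] at h1
      linarith
    have hstep1 : (∮ s₁ in C(0, ε), (x : ℂ) ^ (s₁ + s₂) / ((s₁ + s₂) ^ l * (s₁ * s₂) ^ (k + 1)))
        = ∮ s₁ in C(0, ε), (s₂ ^ (k + 1))⁻¹ * ((fun z => F (z + s₂)) s₁ / s₁ ^ (k + 1)) := by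
      apply circleIntegral.integral_congr hε.le
      intro s₁ _
      simp only [hF, hcpow]
      rw [mul_pow]
      ring
    rw [hstep1, circleIntegral.integral_const_mul]
    have hd : DifferentiableOn ℂ (fun z => F (z + s₂)) (Metric.closedBall 0 ε) := by
      intro z hz
      apply DifferentiableAt.differentiableWithinAt
      apply DifferentiableAt.div
      · exact (((differentiableAt_id.add_const s₂).const_mul L).cexp)
      · exact (differentiableAt_id.add_const s₂).pow l
      · exact pow_ne_zero l (hadd z hz)
    rw [cauchy_coeff hε hd k]
    have hshift : iteratedDeriv k (fun z => F (z + s₂)) 0 = iteratedDeriv k F s₂ := by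
      rw [iteratedDeriv_comp_add_const]
      simp
    rw [hshift, hF, F_split L l k s₂ hs₂0]
    ring
  -- outer integral
  have h2ε : (0:ℝ) < 2 * ε := by linarith
  rw [circleIntegral.integral_congr h2ε.le hinner, circleIntegral.integral_const_mul]
  -- split the integral
  have hsub : ∀ z : ℂ, QQ L l k z / z ^ (k + 1) + iteratedDeriv k (HH L l) z / z ^ (k + 1)
      = QQ L l k z / z ^ (k + 1) - (-1 : ℂ) * (iteratedDeriv k (HH L l) z / z ^ (k + 1)) := by
    intro z; ring
  have hT1 : CircleIntegrable (fun z => QQ L l k z / z ^ (k + 1)) 0 (2 * ε) := by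
    apply ContinuousOn.circleIntegrable h2ε.le
    intro z hz
    have hz0 : z ≠ 0 := by
      intro h
      rw [h, mem_sphere_zero_iff_norm, norm_zero] at hz
      linarith
    exact (((QQ_step L l k hz0).differentiableAt.continuousAt).div
      ((continuous_pow (k+1)).continuousAt) (pow_ne_zero _ hz0)).continuousWithinAt
  have hT2 : CircleIntegrable (fun z => (-1 : ℂ) * (iteratedDeriv k (HH L l) z / z ^ (k + 1)))
      0 (2 * ε) := by
    apply ContinuousOn.circleIntegrable h2ε.le
    intro z hz
    have hz0 : z ≠ 0 := by
      intro h
      rw [h, mem_sphere_zero_iff_norm, norm_zero] at hz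
      linarith
    exact (continuousAt_const.mul ((((HH_iter_diff L l k) z).continuousAt).div
      ((continuous_pow (k+1)).continuousAt) (pow_ne_zero _ hz0))).continuousWithinAt
  rw [circleIntegral.integral_congr h2ε.le (fun z _ => hsub z),
    circleIntegral.integral_sub hT1 hT2, circleIntegral.integral_const_mul,
    QQ_zero_integral L l k h2ε,
    cauchy_coeff h2ε ((HH_iter_diff L l k).differentiableOn) k,
    itd_itd k k, HH_itd_zero L l (k + k)]
  -- final arithmetic
  have hchoose : ((Nat.choose (2 * k) k : ℕ) : ℂ) * (k ! : ℂ) * (k ! : ℂ) = (((2 * k)! : ℕ) : ℂ) := by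
    have := Nat.choose_mul_factorial_mul_factorial (show k ≤ 2 * k by omega)
    rw [show 2 * k - k = k by omega] at this
    exact_mod_cast this
  simp only [aa]
  have h2k : k + k = 2 * k := by ring
  rw [h2k]
  have hfac2 : (((2 * k + l)! : ℕ) : ℂ) ≠ 0 := Nat.cast_ne_zero.mpr (2 * k + l).factorial_ne_zero
  field_simp
  linear_combination ((-(2:ℂ)) * (Real.pi:ℂ) * Complex.I * L ^ (k * 2) * L ^ l) * hchoose
end
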